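/- arXiv:1907.02521 — 7 statements merged into one kernel-verified Lean document; each statement's English description precedes it below -/
import Mathlib

section
/- Let Φ be a positive semidefinite matrix on C^d ⊗ C^m with Tr Φ = 1. Suppose there exist positive semidefinite matrices Φ' and Φ'' with Tr Φ' = Tr Φ'' = 1, a real number s ≥ 0, and the relation Φ = (1+s)Φ' − s Φ'', where additionally Tr[(Φ')^k] ≤ 1/d^{k-1} for all k ≥ 1 (e.g., Φ' is the Choi state of an entanglement-breaking channel with input dimension d). Then for every k ≥ 1, s ≥ d^{(k-1)/k} (Tr[Φ^k])^{1/k} − 1. -/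
open Matrix
open scoped ComplexOrder

namespace MyAux

variable {n : Type*} [Fintype n] [DecidableEq n]

lemma conj_pow (U D : Matrix n n ℂ) (hU : U * star U = 1) (hU' : star U * U = 1) (k : ℕ) :
    (U * D * star U) ^ k = U * D ^ k * star U := by
  have h : ∀ X : Matrix n n ℂ, star U * (U * X) = X := fun X => by
    rw [← Matrix.mul_assoc, hU', Matrix.one_mul]
  induction k with
  | zero => simpa using hU.symm
  | succ k ih =>
      rw [pow_succ, ih, pow_succ]
      simp only [Matrix.mul_assoc, h]

lemma trace_pow_re {A : Matrix n n ℂ} (hA : A.IsHermitian) (k : ℕ) :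
    ((A ^ k).trace).re = ∑ i, (hA.eigenvalues i) ^ k := by
  have hU : (hA.eigenvectorUnitary : Matrix n n ℂ) * star (hA.eigenvectorUnitary : Matrix n n ℂ) = 1 :=
    mem_unitaryGroup_iff.mp hA.eigenvectorUnitary.2
  have hU' : star (hA.eigenvectorUnitary : Matrix n n ℂ) * (hA.eigenvectorUnitary : Matrix n n ℂ) = 1 :=
    mem_unitaryGroup_iff'.mp hA.eigenvectorUnitary.2
  conv_lhs => rw [hA.spectral_theorem, Unitary.conjStarAlgAut_apply]
  rw [conj_pow _ _ hU hU' k, trace_mul_cycle, hU', Matrix.one_mul,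
    diagonal_pow, trace_diagonal]
  rw [Complex.re_sum]
  congr 1; ext i
  simp [← Complex.ofReal_pow]

lemma eig_le {A : Matrix n n ℂ} (hA : A.IsHermitian) (c : ℝ)
    (h : (((c : ℂ)) • 1 - A).PosSemidef) (i : n) : hA.eigenvalues i ≤ c := by
  set v : n → ℂ := ⇑(hA.eigenvectorBasis i) with hv
  have hnorm : star v ⬝ᵥ v = 1 := by
    have h1 : (inner ℂ (hA.eigenvectorBasis i) (hA.eigenvectorBasis i) : ℂ) = 1 := by
      rw [inner_self_eq_norm_sq_to_K, hA.eigenvectorBasis.orthonormal.1 i]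
      norm_num
    rwa [EuclideanSpace.inner_eq_star_dotProduct, dotProduct_comm] at h1
  have h2 := h.dotProduct_mulVec_nonneg v
  rw [sub_mulVec, smul_mulVec, one_mulVec, hv, hA.mulVec_eigenvectorBasis,
    dotProduct_sub, dotProduct_smul, dotProduct_smul] at h2
  rw [← hv, hnorm] at h2
  have h3 : (0 : ℂ) ≤ ((c - hA.eigenvalues i : ℝ) : ℂ) := by
    convert h2 using 1
    push_cast
    simp [smul_eq_mul, Complex.real_smul]
  have := Complex.zero_le_real.mp h3
  linarith

lemma shift_psd {A : Matrix n n ℂ} (hA : A.IsHermitian) (c : ℝ)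
    (h : ∀ i, hA.eigenvalues i ≤ c) : (((c : ℂ)) • 1 - A).PosSemidef := by
  have hU : (hA.eigenvectorUnitary : Matrix n n ℂ) * star (hA.eigenvectorUnitary : Matrix n n ℂ) = 1 :=
    mem_unitaryGroup_iff.mp hA.eigenvectorUnitary.2
  have key : ((c : ℂ)) • 1 - A =
      (hA.eigenvectorUnitary : Matrix n n ℂ) *
        diagonal (fun i => ((c - hA.eigenvalues i : ℝ) : ℂ)) *
        star (hA.eigenvectorUnitary : Matrix n n ℂ) := by
    conv_lhs => rw [hA.spectral_theorem, Unitary.conjStarAlgAut_apply, ← hU]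
    have e1 : (c : ℂ) • ((hA.eigenvectorUnitary : Matrix n n ℂ) * star (hA.eigenvectorUnitary : Matrix n n ℂ))
        = (hA.eigenvectorUnitary : Matrix n n ℂ) * ((c : ℂ) • (1 : Matrix n n ℂ)) *
          star (hA.eigenvectorUnitary : Matrix n n ℂ) := by
      rw [Matrix.mul_smul, Matrix.mul_one, Matrix.smul_mul]
    rw [e1, ← Matrix.sub_mul, ← Matrix.mul_sub]
    congr 2
    rw [← diagonal_one, ← diagonal_smul, diagonal_sub]
    congr 1; ext i
    simp only [Pi.smul_apply, Pi.sub_apply, Function.comp_apply, smul_eq_mul, mul_one]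
    simp [diagonal, Matrix.of_apply]
  rw [key]
  exact (posSemidef_diagonal_iff.mpr fun i =>
    Complex.zero_le_real.mpr (by linarith [h i])).mul_mul_conjTranspose_same _

lemma smul_psd {A : Matrix n n ℂ} (hA : A.PosSemidef) {c : ℝ} (hc : 0 ≤ c) :
    (((c : ℂ)) • A).PosSemidef := by
  refine PosSemidef.of_dotProduct_mulVec_nonneg ?_ fun x => ?_
  · unfold Matrix.IsHermitian
    rw [conjTranspose_smul, hA.1.eq, Complex.star_def, Complex.conj_ofReal]
  · rw [smul_mulVec, dotProduct_smul, smul_eq_mul]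
    exact mul_nonneg (Complex.zero_le_real.mpr hc) (hA.dotProduct_mulVec_nonneg x)

end MyAux
open MyAux in
/-- If a density matrix `Φ` on `C^d ⊗ C^m` decomposes as `Φ = (1+s)Φ' - sΦ''` with `s ≥ 0`,
`Φ', Φ''` density matrices, and `Tr[(Φ')^k] ≤ 1/d^(k-1)` for all `k ≥ 1`, then for every
`k ≥ 1`, `s ≥ d^((k-1)/k) (Tr[Φ^k])^(1/k) - 1`. -/
theorem stmt2 (d m : ℕ) (hd : 0 < d)
    (Φ Φ' Φ'' : Matrix (Fin d × Fin m) (Fin d × Fin m) ℂ)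
    (hΦ : Φ.PosSemidef) (ht : Φ.trace = 1)
    (hΦ' : Φ'.PosSemidef) (ht' : Φ'.trace = 1)
    (hΦ'' : Φ''.PosSemidef) (ht'' : Φ''.trace = 1)
    (s : ℝ) (hs : 0 ≤ s)
    (hdec : Φ = ((1 + s : ℝ) : ℂ) • Φ' - ((s : ℝ) : ℂ) • Φ'')
    (hmom : ∀ k : ℕ, 1 ≤ k → ((Φ' ^ k).trace).re ≤ 1 / (d : ℝ) ^ (k - 1)) :
    ∀ k : ℕ, 1 ≤ k →
      (d : ℝ) ^ (((k : ℝ) - 1) / (k : ℝ)) * (((Φ ^ k).trace).re) ^ ((1 : ℝ) / (k : ℝ)) - 1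
        ≤ s := by
  intro k hk
  have hd1 : (1 : ℝ) ≤ (d : ℝ) := by exact_mod_cast hd
  have hdpos : (0 : ℝ) < (d : ℝ) := by positivity
  -- Step 1: eigenvalues of Φ' are bounded by 1/d
  have hev' : ∀ i, hΦ'.1.eigenvalues i ≤ 1 / d := by
    intro i
    by_contra hgt
    push_neg at hgt
    set lam := hΦ'.1.eigenvalues i with hlam
    have hlpos : 0 < lam := lt_of_le_of_lt (by positivity) hgt
    have hone : (1 : ℝ) < (d : ℝ) * lam := by
      rw [div_lt_iff₀ hdpos] at hgt
      nlinarith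
    obtain ⟨j, hj⟩ := pow_unbounded_of_one_lt (d : ℝ) hone
    have hj1 : 1 ≤ j := by
      rcases Nat.eq_zero_or_pos j with h0 | h
      · subst h0; simp at hj; linarith
      · exact h
    obtain ⟨j', rfl⟩ : ∃ j', j = j' + 1 := ⟨j - 1, (Nat.succ_pred_eq_of_pos hj1).symm⟩
    have h1 : lam ^ (j' + 1) ≤ ∑ i', (hΦ'.1.eigenvalues i') ^ (j' + 1) :=
      Finset.single_le_sum
        (fun i' _ => pow_nonneg (hΦ'.eigenvalues_nonneg i') _) (Finset.mem_univ i)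
    have h2 := hmom (j' + 1) (by omega)
    rw [trace_pow_re hΦ'.1] at h2
    have h3 : lam ^ (j' + 1) ≤ 1 / (d : ℝ) ^ j' := by
      simpa using h1.trans h2
    have h4 : ((d : ℝ) * lam) ^ (j' + 1) ≤ (d : ℝ) := by
      rw [mul_pow]
      calc (d : ℝ) ^ (j' + 1) * lam ^ (j' + 1)
          ≤ (d : ℝ) ^ (j' + 1) * (1 / (d : ℝ) ^ j') := by
            exact mul_le_mul_of_nonneg_left h3 (by positivity)
        _ = (d : ℝ) := by
            rw [pow_succ]
            field_simp
    linarith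
  -- Step 2: (1/d)•I - Φ' is PSD
  have hpsd1 : ((((1 / d : ℝ)) : ℂ) • 1 - Φ').PosSemidef := shift_psd hΦ'.1 _ hev'
  -- Step 3: ((1+s)/d)•I - Φ is PSD
  set c : ℝ := (1 + s) / d with hc
  have hcnn : 0 ≤ c := by positivity
  have key : ((c : ℝ) : ℂ) • (1 : Matrix (Fin d × Fin m) (Fin d × Fin m) ℂ) - Φ
      = ((1 + s : ℝ) : ℂ) • ((((1 / d : ℝ)) : ℂ) • 1 - Φ') + ((s : ℝ) : ℂ) • Φ'' := by
    rw [hdec, hc]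
    push_cast
    rw [smul_sub, smul_smul]
    have : ((1 : ℂ) + s) * ((1 : ℂ) / d) = (1 + (s : ℂ)) / d := by ring
    rw [this]
    abel
  have hpsdΦ : (((c : ℝ) : ℂ) • 1 - Φ).PosSemidef := by
    rw [key]
    exact (smul_psd hpsd1 (by linarith)).add (smul_psd hΦ'' hs)
  have hev : ∀ i, hΦ.1.eigenvalues i ≤ c := eig_le hΦ.1 c hpsdΦ
  -- Step 4: trace power bound
  obtain ⟨k', rfl⟩ : ∃ k'', k = k'' + 1 := ⟨k - 1, (Nat.succ_pred_eq_of_pos hk).symm⟩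
  have hT1 : ∑ i, hΦ.1.eigenvalues i = 1 := by
    have h := trace_pow_re hΦ.1 1
    simp only [pow_one, ht, Complex.one_re] at h
    exact h.symm
  have hT0 : 0 ≤ ((Φ ^ (k' + 1)).trace).re := by
    rw [trace_pow_re hΦ.1]
    exact Finset.sum_nonneg fun i _ => pow_nonneg (hΦ.eigenvalues_nonneg i) _
  have hTle : ((Φ ^ (k' + 1)).trace).re ≤ c ^ k' := by
    rw [trace_pow_re hΦ.1]
    calc ∑ i, hΦ.1.eigenvalues i ^ (k' + 1)
        ≤ ∑ i, c ^ k' * hΦ.1.eigenvalues i := by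
          refine Finset.sum_le_sum fun i _ => ?_
          rw [pow_succ]
          exact mul_le_mul (pow_le_pow_left₀ (hΦ.eigenvalues_nonneg i) (hev i) k')
            le_rfl (hΦ.eigenvalues_nonneg i) (pow_nonneg hcnn k')
      _ = c ^ k' := by rw [← Finset.mul_sum, hT1, mul_one]
  -- Step 5: rpow arithmetic
  set T : ℝ := ((Φ ^ (k' + 1)).trace).re with hT
  set kk : ℝ := ((k' + 1 : ℕ) : ℝ) with hkk
  have hkpos : (0 : ℝ) < kk := by positivity
  set e : ℝ := (kk - 1) / kk with he
  have he0 : 0 ≤ e := by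
    apply div_nonneg _ hkpos.le
    simp [hkk]
  have he1 : e ≤ 1 := by
    rw [he, div_le_one hkpos]; linarith
  suffices h : (d : ℝ) ^ e * T ^ ((1 : ℝ) / kk) ≤ 1 + s by linarith
  have step1 : T ^ ((1 : ℝ) / kk) ≤ (c ^ k') ^ ((1 : ℝ) / kk) :=
    Real.rpow_le_rpow hT0 hTle (by positivity)
  have hck' : ((c ^ k' : ℝ) : ℝ) = c ^ (kk - 1) := by
    rw [← Real.rpow_natCast c k']
    congr 1
    simp [hkk]
  have step2 : (d : ℝ) ^ e * (c ^ k') ^ ((1 : ℝ) / kk) = (1 + s) ^ e := by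
    rw [hck', ← Real.rpow_mul hcnn,
      show (kk - 1) * ((1 : ℝ) / kk) = e by rw [he]; ring,
      ← Real.mul_rpow hdpos.le hcnn]
    congr 1
    rw [hc]
    field_simp
  have step3 : (1 + s : ℝ) ^ e ≤ (1 + s) ^ (1 : ℝ) :=
    Real.rpow_le_rpow_of_exponent_le (by linarith) he1
  rw [Real.rpow_one] at step3
  calc (d : ℝ) ^ e * T ^ ((1 : ℝ) / kk)
      ≤ (d : ℝ) ^ e * (c ^ k') ^ ((1 : ℝ) / kk) :=
        mul_le_mul_of_nonneg_left step1 (Real.rpow_nonneg hdpos.le e)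
    _ = (1 + s) ^ e := step2
    _ ≤ 1 + s := step3
end

section
/- The maximally entangled state Φ⁺ = (1/d) Σ_{i,j} |ii⟩⟨jj| on C^d ⊗ C^d can be written as Φ⁺ = d ρ⁺ − (d−1) ρ⁻, where ρ⁻ = (1/(d(d−1))) Σ_{i≠j} |ij⟩⟨ij| and ρ⁺ = (Φ⁺ + (d−1)ρ⁻)/d, and both ρ⁺ and ρ⁻ are separable density matrices whose partial trace over the second system equals I_d/d. -/
open scoped Kronecker
open Matrix
open scoped ComplexOrder

/-- The outer product `|ψ⟩⟨ψ|`. -/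
noncomputable def outer {A : Type*} (ψ : A → ℂ) : Matrix A A ℂ :=
  Matrix.vecMulVec ψ (star ψ)

/-- Partial trace over the second tensor factor. -/
noncomputable def ptraceB {A B : Type*} [Fintype B] (ρ : Matrix (A × B) (A × B) ℂ) :
    Matrix A A ℂ :=
  Matrix.of fun i j => ∑ k, ρ (i, k) (j, k)

/-- A bipartite matrix is separable if it is a convex combination of pure product states. -/
def SepState {A B : Type*} [Fintype A] [Fintype B]
    (ρ : Matrix (A × B) (A × B) ℂ) : Prop :=
  ∃ (n : ℕ) (p : Fin n → ℝ) (ψ : Fin n → A → ℂ) (φ : Fin n → B → ℂ),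
    (∀ i, 0 ≤ p i) ∧ (∑ i, p i = 1) ∧
    (∀ i, star (ψ i) ⬝ᵥ ψ i = 1) ∧ (∀ i, star (φ i) ⬝ᵥ φ i = 1) ∧
    ρ = ∑ i, (p i : ℂ) • (outer (ψ i) ⊗ₖ outer (φ i))

/-- The maximally entangled state `Φ⁺ = (1/d) ∑_{i,j} |ii⟩⟨jj|`. -/
noncomputable def maxEnt (d : ℕ) : Matrix (Fin d × Fin d) (Fin d × Fin d) ℂ :=
  Matrix.of fun p q => if p.1 = p.2 ∧ q.1 = q.2 then (d : ℂ)⁻¹ else 0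

/-- The separable state `ρ⁻ = (1/(d(d-1))) ∑_{i≠j} |ij⟩⟨ij|`. -/
noncomputable def rhoMinus (d : ℕ) : Matrix (Fin d × Fin d) (Fin d × Fin d) ℂ :=
  Matrix.of fun p q => if p = q ∧ p.1 ≠ p.2 then ((d : ℂ) * ((d : ℂ) - 1))⁻¹ else 0

/-- The separable state `ρ⁺ = (Φ⁺ + (d-1)ρ⁻)/d`. -/
noncomputable def rhoPlus (d : ℕ) : Matrix (Fin d × Fin d) (Fin d × Fin d) ℂ :=
  (d : ℂ)⁻¹ • (maxEnt d + ((d : ℂ) - 1) • rhoMinus d)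

lemma geom4 (z : ℂ) (hz : z^4 = 1) : ∑ k : Fin 4, z^(k:ℕ) = if z = 1 then 4 else 0 := by
  rw [Fin.sum_univ_four]
  by_cases h : z = 1
  · subst h; norm_num
  · rw [if_neg h]
    have h2 : (z - 1) * (z^(0:ℕ) + z^1 + z^2 + z^3) = 0 := by linear_combination hz
    rcases mul_eq_zero.mp h2 with h3 | h3
    · exact absurd (sub_eq_zero.mp h3) h
    · simpa using h3

lemma Ipow_eq_one_iff (m n : ℕ) (hm : m ≤ 2) (hn : n ≤ 2) :
    Complex.I^m * (-Complex.I)^n = 1 ↔ m = n := by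
  interval_cases m <;> interval_cases n <;> norm_num [pow_succ, Complex.ext_iff]

lemma indicator_iff {α : Type*} [DecidableEq α] (p1 p2 q1 q2 : α) :
    (∀ x, ((if x = p1 then 1 else 0) + (if x = q2 then 1 else 0) : ℕ)
        = (if x = q1 then 1 else 0) + (if x = p2 then 1 else 0)) ↔
      ((p1 = p2 ∧ q1 = q2) ∨ (p1 = q1 ∧ p2 = q2)) := by
  constructor
  · intro h
    by_cases c1 : p1 = q1
    · subst c1
      have hq := h q2
      by_cases c2 : q2 = p2
      · exact Or.inr ⟨rfl, c2.symm⟩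
      · exfalso; simp only [if_pos rfl, if_neg c2] at hq; split_ifs at hq <;> omega
    · have hp := h p1
      simp only [if_pos rfl, if_neg c1] at hp
      by_cases c2 : p1 = p2
      · subst c2
        have hq := h q1
        simp only [if_pos rfl, if_neg (Ne.symm c1)] at hq
        by_cases c3 : q1 = q2
        · exact Or.inl ⟨rfl, c3⟩
        · exfalso; rw [if_neg c3] at hq; split_ifs at hq <;> omega
      · exfalso; rw [if_neg c2] at hp; split_ifs at hp <;> omega
  · rintro (⟨rfl, rfl⟩ | ⟨rfl, rfl⟩) x
    · omega
    · rfl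

lemma entry_sum (d : ℕ) (p1 p2 q1 q2 : Fin d) :
    ∑ a : Fin d → Fin 4,
        Complex.I ^ ((a p1 : ℕ) + (a q2 : ℕ)) * (-Complex.I) ^ ((a q1 : ℕ) + (a p2 : ℕ))
    = if (p1 = p2 ∧ q1 = q2) ∨ (p1 = q1 ∧ p2 = q2) then (4:ℂ)^d else 0 := by
  set m : Fin d → ℕ := fun x => (if x = p1 then 1 else 0) + (if x = q2 then 1 else 0) with hm
  set n : Fin d → ℕ := fun x => (if x = q1 then 1 else 0) + (if x = p2 then 1 else 0) with hn
  set z : Fin d → ℂ := fun x => Complex.I ^ (m x) * (-Complex.I) ^ (n x) with hz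
  have hI4 : Complex.I ^ (4:ℕ) = 1 := by norm_num [pow_succ, Complex.I_sq]
  have hnI4 : (-Complex.I) ^ (4:ℕ) = 1 := by
    rw [Even.neg_pow (by decide)]; exact hI4
  have hz4 : ∀ x, (z x) ^ 4 = 1 := by
    intro x
    rw [hz]
    rw [mul_pow, ← pow_mul, ← pow_mul, mul_comm (m x) 4, mul_comm (n x) 4, pow_mul, pow_mul,
      hI4, hnI4, one_pow, one_pow, one_mul]
  have hmle : ∀ x, m x ≤ 2 := fun x => by rw [hm]; dsimp only; split_ifs <;> omega
  have hnle : ∀ x, n x ≤ 2 := fun x => by rw [hn]; dsimp only; split_ifs <;> omega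
  have key1 : ∀ a : Fin d → Fin 4,
      Complex.I ^ ((a p1 : ℕ) + (a q2 : ℕ)) * (-Complex.I) ^ ((a q1 : ℕ) + (a p2 : ℕ))
      = ∏ x, (z x) ^ (a x : ℕ) := by
    intro a
    have e1 : ∀ x, (z x) ^ (a x : ℕ)
        = Complex.I ^ (m x * (a x : ℕ)) * (-Complex.I) ^ (n x * (a x : ℕ)) := by
      intro x; rw [hz]; dsimp only; rw [mul_pow, ← pow_mul, ← pow_mul]
    simp_rw [e1]
    rw [Finset.prod_mul_distrib, Finset.prod_pow_eq_pow_sum, Finset.prod_pow_eq_pow_sum]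
    have hms : ∑ x, m x * (a x : ℕ) = (a p1 : ℕ) + (a q2 : ℕ) := by
      simp [hm, add_mul, ite_mul, one_mul, zero_mul, Finset.sum_add_distrib,
        Finset.sum_ite_eq', Finset.mem_univ]
    have hns : ∑ x, n x * (a x : ℕ) = (a q1 : ℕ) + (a p2 : ℕ) := by
      simp [hn, add_mul, ite_mul, one_mul, zero_mul, Finset.sum_add_distrib,
        Finset.sum_ite_eq', Finset.mem_univ]
    rw [hms, hns]
  simp_rw [key1]
  rw [← Fintype.prod_sum fun x (k : Fin 4) => (z x) ^ (k:ℕ)]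
  have key3 : ∀ x, ∑ k : Fin 4, (z x) ^ (k:ℕ) = if z x = 1 then 4 else 0 :=
    fun x => geom4 _ (hz4 x)
  simp_rw [key3]
  by_cases hc : (p1 = p2 ∧ q1 = q2) ∨ (p1 = q1 ∧ p2 = q2)
  · rw [if_pos hc]
    have hz1 : ∀ x, z x = 1 := by
      intro x
      rw [hz]
      exact (Ipow_eq_one_iff _ _ (hmle x) (hnle x)).mpr
        (((indicator_iff p1 p2 q1 q2).mpr hc) x)
    simp [hz1]
  · rw [if_neg hc]
    obtain ⟨x0, hx0⟩ := not_forall.mp (fun hall => hc ((indicator_iff p1 p2 q1 q2).mp hall))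
    refine Finset.prod_eq_zero (Finset.mem_univ x0) ?_
    rw [if_neg]
    intro h1
    exact hx0 ((Ipow_eq_one_iff _ _ (hmle x0) (hnle x0)).mp h1)
lemma outer_psd {A : Type*} [Fintype A] (ψ : A → ℂ) : (outer ψ).PosSemidef := by
  rw [posSemidef_iff_dotProduct_mulVec]
  constructor
  · ext i j
    simp [outer, conjTranspose_apply, vecMulVec_apply, mul_comm]
  · intro x
    have hmv : outer ψ *ᵥ x = fun i => ψ i * (star ψ ⬝ᵥ x) := by
      ext i
      simp [outer, mulVec, dotProduct, vecMulVec_apply, Finset.mul_sum, mul_assoc]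
    rw [hmv]
    have : star x ⬝ᵥ (fun i => ψ i * (star ψ ⬝ᵥ x)) = star (star ψ ⬝ᵥ x) * (star ψ ⬝ᵥ x) := by
      simp only [dotProduct, Pi.star_apply, star_sum, star_mul', star_star, Finset.sum_mul]
      exact Finset.sum_congr rfl fun i _ => by ring
    rw [this]
    exact star_mul_self_nonneg _

lemma outer_kron {A B : Type*} (ψ : A → ℂ) (φ : B → ℂ) :
    outer ψ ⊗ₖ outer φ = outer (fun p : A × B => ψ p.1 * φ p.2) := by
  ext ⟨p1, p2⟩ ⟨q1, q2⟩
  simp [outer, kroneckerMap_apply, vecMulVec_apply]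
  ring

lemma psd_smul {A : Type*} [Fintype A] {M : Matrix A A ℂ} (hM : M.PosSemidef) {c : ℝ}
    (hc : 0 ≤ c) : ((c : ℂ) • M).PosSemidef := by
  rw [posSemidef_iff_dotProduct_mulVec]
  constructor
  · ext i j
    simp [conjTranspose_apply, hM.1.apply]
  · intro x
    rw [smul_mulVec, dotProduct_smul]
    exact mul_nonneg (by exact_mod_cast hc) (hM.dotProduct_mulVec_nonneg x)

lemma psd_sum {A ι : Type*} [Fintype A] [Fintype ι] {f : ι → Matrix A A ℂ}
    (hf : ∀ i, (f i).PosSemidef) : (∑ i, f i).PosSemidef := by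
  classical
  refine Finset.sum_induction f _ (fun a b ha hb => ha.add hb) ?_ (fun i _ => hf i)
  exact Matrix.PosSemidef.zero

lemma sep_psd {A B : Type*} [Fintype A] [Fintype B] {ρ : Matrix (A × B) (A × B) ℂ}
    (h : SepState ρ) : ρ.PosSemidef := by
  obtain ⟨n, p, ψ, φ, h0, -, -, -, hρ⟩ := h
  rw [hρ]
  refine psd_sum fun i => ?_
  rw [outer_kron]
  exact psd_smul (outer_psd _) (h0 i)
lemma sepState_of_fintype {A B ι : Type*} [Fintype A] [Fintype B] [Fintype ι]
    (p : ι → ℝ) (ψ : ι → A → ℂ) (φ : ι → B → ℂ) (ρ : Matrix (A × B) (A × B) ℂ)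
    (h0 : ∀ i, 0 ≤ p i) (h1 : ∑ i, p i = 1)
    (hψ : ∀ i, star (ψ i) ⬝ᵥ ψ i = 1) (hφ : ∀ i, star (φ i) ⬝ᵥ φ i = 1)
    (hρ : ρ = ∑ i, (p i : ℂ) • (outer (ψ i) ⊗ₖ outer (φ i))) : SepState ρ := by
  classical
  obtain ⟨e⟩ : Nonempty (Fin (Fintype.card ι) ≃ ι) := ⟨(Fintype.equivFin ι).symm⟩
  refine ⟨Fintype.card ι, p ∘ e, ψ ∘ e, φ ∘ e, fun i => h0 _, ?_, fun i => hψ _, fun i => hφ _, ?_⟩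
  · rw [← h1]; exact Fintype.sum_equiv e _ _ fun i => rfl
  · rw [hρ]; exact (Fintype.sum_equiv e _ _ fun i => rfl).symm

lemma single_norm {d : ℕ} (i : Fin d) : star (Pi.single i 1 : Fin d → ℂ) ⬝ᵥ Pi.single i 1 = 1 := by
  simp [dotProduct, Pi.single_apply, apply_ite]

lemma sep_rhoMinus (d : ℕ) (hd : 2 ≤ d) : SepState (rhoMinus d) := by
  have hd0 : (0:ℝ) < (d:ℝ) * ((d:ℝ) - 1) := by
    have : (2:ℝ) ≤ d := by exact_mod_cast hd
    nlinarith
  refine sepState_of_fintype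
    (fun x : Fin d × Fin d => if x.1 = x.2 then 0 else ((d:ℝ) * ((d:ℝ) - 1))⁻¹)
    (fun x => Pi.single x.1 1) (fun x => Pi.single x.2 1) _
    (fun i => by split <;> positivity) ?_ (fun i => single_norm _) (fun i => single_norm _) ?_
  · rw [Finset.sum_ite, Finset.sum_const, Finset.sum_const]
    have hcard : (Finset.univ.filter fun x : Fin d × Fin d => ¬ x.1 = x.2).card = d * d - d := by
      rw [Finset.filter_not, Finset.card_sdiff_of_subset (Finset.filter_subset _ _)]
      have h2 : (Finset.univ.filter fun x : Fin d × Fin d => x.1 = x.2).card = d := by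
        rw [Finset.card_filter, Fintype.sum_prod_type]
        simp
      simp [h2]
    rw [hcard]
    have : ((d * d - d : ℕ) : ℝ) = (d:ℝ) * ((d:ℝ) - 1) := by
      have h1 : d ≤ d * d := Nat.le_mul_of_pos_left d (by omega)
      push_cast [h1]
      ring
    simp only [smul_eq_mul, mul_zero, zero_add, nsmul_eq_mul, this]
    field_simp
    exact div_self (by have : (2:ℝ) ≤ d := by exact_mod_cast hd
                       linarith)
  · ext ⟨a, b⟩ ⟨c, e⟩
    simp only [rhoMinus, Matrix.of_apply, Matrix.sum_apply, Matrix.smul_apply,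
      Matrix.kroneckerMap_apply, outer, Matrix.vecMulVec_apply, Pi.star_apply,
      Pi.single_apply, smul_eq_mul, Fintype.sum_prod_type]
    simp only [apply_ite (star : ℂ → ℂ), star_one, star_zero, mul_ite, ite_mul, mul_one, mul_zero,
      zero_mul, one_mul, Finset.sum_ite_eq', Finset.mem_univ, if_true]
    by_cases h1 : c = a <;> by_cases h2 : e = b <;>
      simp [h1, h2, Prod.ext_iff, eq_comm, apply_ite (Complex.ofReal)] <;> aesop
lemma sep_rhoPlus (d : ℕ) (hd : 2 ≤ d) : SepState (rhoPlus d) := by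
  classical
  have hd0 : (d:ℂ) ≠ 0 := Nat.cast_ne_zero.mpr (by omega)
  have hd1 : (d:ℂ) - 1 ≠ 0 := by
    intro h
    have : (d:ℂ) = 1 := by linear_combination h
    rw [show (1:ℂ) = ((1:ℕ):ℂ) by norm_num] at this
    exact absurd (Nat.cast_injective this) (by omega)
  set s : ℂ := ((Real.sqrt d : ℝ) : ℂ) with hsdef
  have hs2 : s * s = (d:ℂ) := by
    rw [hsdef, ← Complex.ofReal_mul, Real.mul_self_sqrt (by positivity)]
    norm_cast
  have hsinv : s⁻¹ * s⁻¹ = (d:ℂ)⁻¹ := by rw [← mul_inv, hs2]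
  set ψ : (Fin d → Fin 4) → Fin d → ℂ := fun a i => s⁻¹ * Complex.I ^ ((a i : ℕ)) with hψdef
  have hstar : ∀ a i, star (ψ a i) = s⁻¹ * (-Complex.I) ^ ((a i : ℕ)) := by
    intro a i
    rw [hψdef]
    simp only [star_mul', star_inv₀, star_pow, Complex.star_def, Complex.conj_I, hsdef,
      Complex.conj_ofReal]
  have hnorm : ∀ a, star (ψ a) ⬝ᵥ ψ a = 1 := by
    intro a
    have : ∀ i, star (ψ a i) * ψ a i = (d:ℂ)⁻¹ := by
      intro i
      rw [hstar, hψdef]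
      dsimp only
      have : (-Complex.I) ^ ((a i : ℕ)) * Complex.I ^ ((a i : ℕ)) = 1 := by
        rw [← mul_pow]
        norm_num [Complex.I_mul_I]
      calc s⁻¹ * (-Complex.I) ^ ((a i:ℕ)) * (s⁻¹ * Complex.I ^ ((a i:ℕ)))
          = s⁻¹ * s⁻¹ * ((-Complex.I) ^ ((a i:ℕ)) * Complex.I ^ ((a i:ℕ))) := by ring
        _ = (d:ℂ)⁻¹ := by rw [this, hsinv, mul_one]
    simp only [dotProduct, Pi.star_apply, this, Finset.sum_const, Finset.card_univ,
      Fintype.card_fin, nsmul_eq_mul]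
    field_simp
  refine sepState_of_fintype (fun _ => ((4:ℝ)^d)⁻¹) ψ (fun a => star (ψ a)) _
    (fun _ => by positivity) ?_ hnorm ?_ ?_
  · simp only [Finset.sum_const, Finset.card_univ, nsmul_eq_mul]
    rw [Fintype.card_fun]
    simp only [Fintype.card_fin]
    rw [Nat.cast_pow]
    push_cast
    field_simp
  · intro a
    have h := hnorm a
    simpa [dotProduct, mul_comm] using h
  · ext ⟨p1, p2⟩ ⟨q1, q2⟩
    have hterm : ∀ a : Fin d → Fin 4,
        (outer (ψ a) ⊗ₖ outer (star (ψ a))) (p1, p2) (q1, q2)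
        = (d:ℂ)⁻¹ * (d:ℂ)⁻¹ *
            (Complex.I ^ ((a p1:ℕ) + (a q2:ℕ)) * (-Complex.I) ^ ((a q1:ℕ) + (a p2:ℕ))) := by
      intro a
      simp only [Matrix.kroneckerMap_apply, outer, Matrix.vecMulVec_apply, Pi.star_apply,
        star_star]
      rw [hstar, hstar]
      conv_lhs => rw [hψdef]
      dsimp only
      rw [pow_add, pow_add, ← hsinv]
      ring
    simp only [Matrix.sum_apply, Matrix.smul_apply, hterm, smul_eq_mul]
    rw [← Finset.mul_sum, ← Finset.mul_sum, entry_sum]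
    have hLHS : rhoPlus d ((p1,p2)) ((q1,q2))
        = (d:ℂ)⁻¹ * ((if p1 = p2 ∧ q1 = q2 then (d:ℂ)⁻¹ else 0)
            + ((d:ℂ) - 1) * (if (p1,p2) = (q1,q2) ∧ p1 ≠ p2 then ((d:ℂ) * ((d:ℂ)-1))⁻¹ else 0)) := by
      simp [rhoPlus, maxEnt, rhoMinus, Matrix.smul_apply, Matrix.add_apply]
    rw [hLHS]
    have h4 : ((((4:ℝ)^d)⁻¹ : ℝ) : ℂ) = ((4:ℂ)^d)⁻¹ := by push_cast; ring
    rw [h4]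
    have h4ne : ((4:ℂ)^d) ≠ 0 := by positivity
    by_cases hc : (p1 = p2 ∧ q1 = q2) ∨ (p1 = q1 ∧ p2 = q2)
    · rw [if_pos hc]
      by_cases h1 : p1 = p2 ∧ q1 = q2
      · have h2 : ¬((p1,p2) = (q1,q2) ∧ p1 ≠ p2) := by
          rintro ⟨-, hne⟩; exact hne h1.1
        rw [if_pos h1, if_neg h2]
        field_simp
        ring
      · obtain h2 := hc.resolve_left h1
        have hne : p1 ≠ p2 := by
          intro h
          exact h1 ⟨h, by rw [← h2.1, ← h2.2, h]⟩
        rw [if_neg h1, if_pos ⟨by rw [Prod.ext_iff]; exact ⟨h2.1, h2.2⟩, hne⟩]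
        field_simp
        ring
    · rw [if_neg hc, mul_zero]
      have h1 : ¬(p1 = p2 ∧ q1 = q2) := fun h => hc (Or.inl h)
      have h2 : ¬((p1,p2) = (q1,q2) ∧ p1 ≠ p2) := by
        rintro ⟨h, -⟩
        rw [Prod.ext_iff] at h
        exact hc (Or.inr h)
      rw [if_neg h1, if_neg h2]
      ring

lemma trace_maxEnt (d : ℕ) (hd0 : (d:ℂ) ≠ 0) : (maxEnt d).trace = 1 := by
  rw [Matrix.trace]
  simp only [Matrix.diag, maxEnt, Matrix.of_apply, and_self, Fintype.sum_prod_type]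
  simp [Finset.sum_ite_eq', Finset.mul_sum]
  field_simp

lemma card_offdiag (d : ℕ) :
    (Finset.univ.filter fun x : Fin d × Fin d => ¬ x.1 = x.2).card = d * d - d := by
  rw [Finset.filter_not, Finset.card_sdiff_of_subset (Finset.filter_subset _ _)]
  have h2 : (Finset.univ.filter fun x : Fin d × Fin d => x.1 = x.2).card = d := by
    rw [Finset.card_filter, Fintype.sum_prod_type]
    simp
  simp [h2]

lemma trace_rhoMinus (d : ℕ) (hd : 2 ≤ d) : (rhoMinus d).trace = 1 := by
  have hd0 : (d:ℂ) ≠ 0 := Nat.cast_ne_zero.mpr (by omega)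
  have hd1 : (d:ℂ) - 1 ≠ 0 := by
    intro h
    have h' : (d:ℂ) = 1 := by linear_combination h
    rw [show (1:ℂ) = ((1:ℕ):ℂ) by norm_num] at h'
    exact absurd (Nat.cast_injective h') (by omega)
  simp only [Matrix.trace, Matrix.diag, rhoMinus, Matrix.of_apply, true_and]
  rw [Finset.sum_ite, Finset.sum_const, Finset.sum_const]
  have h := card_offdiag d
  rw [show (Finset.univ.filter fun x : Fin d × Fin d => x.1 ≠ x.2) =
    (Finset.univ.filter fun x : Fin d × Fin d => ¬ x.1 = x.2) from rfl, h]
  have hcast : ((d * d - d : ℕ) : ℂ) = (d:ℂ) * ((d:ℂ) - 1) := by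
    have h1 : d ≤ d * d := Nat.le_mul_of_pos_left d (by omega)
    push_cast [h1]
    ring
  simp only [smul_eq_mul, mul_zero, add_zero, nsmul_eq_mul, hcast]
  field_simp

lemma ptraceB_maxEnt (d : ℕ) :
    ptraceB (maxEnt d) = (d:ℂ)⁻¹ • (1 : Matrix (Fin d) (Fin d) ℂ) := by
  ext i j
  simp only [ptraceB, maxEnt, Matrix.of_apply, Matrix.smul_apply, Matrix.one_apply,
    smul_eq_mul]
  by_cases h : i = j
  · subst h
    simp [Finset.sum_ite_eq', and_self]
  · rw [if_neg h, mul_zero]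
    refine Finset.sum_eq_zero fun k _ => ?_
    rw [if_neg]
    rintro ⟨h1, h2⟩
    exact h (h1.trans h2.symm)

lemma ptraceB_rhoMinus (d : ℕ) (hd : 2 ≤ d) :
    ptraceB (rhoMinus d) = (d:ℂ)⁻¹ • (1 : Matrix (Fin d) (Fin d) ℂ) := by
  have hd0 : (d:ℂ) ≠ 0 := Nat.cast_ne_zero.mpr (by omega)
  have hd1 : (d:ℂ) - 1 ≠ 0 := by
    intro h
    have h' : (d:ℂ) = 1 := by linear_combination h
    rw [show (1:ℂ) = ((1:ℕ):ℂ) by norm_num] at h'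
    exact absurd (Nat.cast_injective h') (by omega)
  have key : ∀ (i j k : Fin d), rhoMinus d (i,k) (j,k)
      = if i = j then (if i = k then 0 else ((d:ℂ)*((d:ℂ)-1))⁻¹) else 0 := by
    intro i j k
    simp only [rhoMinus, Matrix.of_apply, Prod.mk.injEq, ne_eq]
    by_cases h1 : i = j <;> by_cases h2 : i = k <;> simp [h1, h2] <;> tauto
  ext i j
  simp only [ptraceB, Matrix.of_apply, key, Matrix.smul_apply, Matrix.one_apply, smul_eq_mul]
  by_cases h : i = j
  · rw [if_pos h, mul_one]
    simp only [if_pos h]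
    have e : ∀ k : Fin d, (if i = k then (0:ℂ) else ((d:ℂ)*((d:ℂ)-1))⁻¹)
        = ((d:ℂ)*((d:ℂ)-1))⁻¹ - (if i = k then ((d:ℂ)*((d:ℂ)-1))⁻¹ else 0) := by
      intro k; by_cases hk : i = k <;> simp [hk]
    simp only [e]
    rw [Finset.sum_sub_distrib, Finset.sum_const, Finset.card_univ, Fintype.card_fin,
      Finset.sum_ite_eq, if_pos (Finset.mem_univ i), nsmul_eq_mul]
    field_simp
  · simp [h]

lemma ptraceB_rhoPlus (d : ℕ) (hd : 2 ≤ d) :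
    ptraceB (rhoPlus d) = (d:ℂ)⁻¹ • (1 : Matrix (Fin d) (Fin d) ℂ) := by
  have hd0 : (d:ℂ) ≠ 0 := Nat.cast_ne_zero.mpr (by omega)
  have expand : ptraceB (rhoPlus d)
      = (d:ℂ)⁻¹ • (ptraceB (maxEnt d) + ((d:ℂ)-1) • ptraceB (rhoMinus d)) := by
    ext i j
    simp [ptraceB, rhoPlus, Finset.sum_add_distrib, Finset.mul_sum, mul_add]
  rw [expand, ptraceB_maxEnt, ptraceB_rhoMinus d hd, smul_smul, ← add_smul, smul_smul]
  congr 1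
  field_simp
  ring

/-- The maximally entangled state decomposes as `Φ⁺ = d ρ⁺ - (d-1) ρ⁻` where `ρ⁺` and
`ρ⁻` are separable density matrices whose partial trace over the second system is
`I_d/d`. -/
theorem stmt6 (d : ℕ) (hd : 2 ≤ d) :
    maxEnt d = (d : ℂ) • rhoPlus d - ((d : ℂ) - 1) • rhoMinus d ∧
    SepState (rhoPlus d) ∧ SepState (rhoMinus d) ∧
    (rhoPlus d).PosSemidef ∧ (rhoPlus d).trace = 1 ∧
    (rhoMinus d).PosSemidef ∧ (rhoMinus d).trace = 1 ∧
    ptraceB (rhoPlus d) = (d : ℂ)⁻¹ • (1 : Matrix (Fin d) (Fin d) ℂ) ∧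
    ptraceB (rhoMinus d) = (d : ℂ)⁻¹ • (1 : Matrix (Fin d) (Fin d) ℂ) := by
  have hd0 : (d:ℂ) ≠ 0 := Nat.cast_ne_zero.mpr (by omega)
  have hd1 : (d:ℂ) - 1 ≠ 0 := by
    intro h
    have h' : (d:ℂ) = 1 := by linear_combination h
    rw [show (1:ℂ) = ((1:ℕ):ℂ) by norm_num] at h'
    exact absurd (Nat.cast_injective h') (by omega)
  refine ⟨?_, sep_rhoPlus d hd, sep_rhoMinus d hd, sep_psd (sep_rhoPlus d hd), ?_,
    sep_psd (sep_rhoMinus d hd), trace_rhoMinus d hd, ptraceB_rhoPlus d hd,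
    ptraceB_rhoMinus d hd⟩
  · rw [rhoPlus, smul_smul, mul_inv_cancel₀ hd0, one_smul]
    abel
  · rw [rhoPlus, Matrix.trace_smul, Matrix.trace_add, Matrix.trace_smul,
      trace_maxEnt d hd0, trace_rhoMinus d hd]
    simp only [smul_eq_mul, mul_one]
    field_simp
    ring
end

section
/- The robustness of entanglement of the maximally entangled state on C^d ⊗ C^d with respect to separable states satisfying the Choi marginal condition is exactly d − 1; equivalently, if Φ⁺ + s σ = (1+s) σ' with σ, σ' separable density matrices, then s ≥ d − 1, and s = d − 1 is achievable. -/
open scoped Kronecker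
open Matrix

/-! ### Auxiliary material: cube root of unity -/

noncomputable def ω3 : ℂ := Complex.exp (2 * Real.pi * Complex.I / 3)

lemma ω3_prim : IsPrimitiveRoot ω3 3 := Complex.isPrimitiveRoot_exp 3 (by norm_num)

lemma ω3_pow3 : ω3 ^ 3 = 1 := ω3_prim.pow_eq_one

lemma ω3_ne_zero : ω3 ≠ 0 := by
  intro h
  have := ω3_pow3
  rw [h] at this
  simp at this

lemma conj_ω3 : (starRingEnd ℂ) ω3 = ω3 ^ 2 := by
  have habs : ‖ω3‖ = 1 := by
    rw [ω3, Complex.norm_exp]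
    have : (2 * Real.pi * Complex.I / 3).re = 0 := by
      simp [Complex.div_re, Complex.mul_re]
    rw [this, Real.exp_zero]
  have h1 : ω3 * (starRingEnd ℂ) ω3 = 1 := by
    rw [Complex.mul_conj, Complex.normSq_eq_norm_sq, habs]; norm_num
  have h2 : ω3 * ω3 ^ 2 = 1 := by rw [← pow_succ']; exact ω3_pow3
  exact mul_left_cancel₀ ω3_ne_zero (h1.trans h2.symm)

lemma ω3_conj_mul : (starRingEnd ℂ) ω3 * ω3 = 1 := by
  rw [conj_ω3, ← pow_succ]; exact ω3_pow3

lemma ω3_sum (m : ℕ) : (∑ t : Fin 3, ω3 ^ ((t : ℕ) * m)) = if 3 ∣ m then 3 else 0 := by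
  have key : ∀ t : Fin 3, ω3 ^ ((t : ℕ) * m) = (ω3 ^ m) ^ (t : ℕ) := fun t => by
    rw [← pow_mul, Nat.mul_comm]
  simp_rw [key]
  rw [Fin.sum_univ_eq_sum_range (fun t => (ω3 ^ m) ^ t) 3]
  by_cases h : 3 ∣ m
  · rw [if_pos h, (ω3_prim.pow_eq_one_iff_dvd m).2 h]
    simp
  · rw [if_neg h]
    have hne : ω3 ^ m ≠ 1 := fun hh => h ((ω3_prim.pow_eq_one_iff_dvd m).1 hh)
    rw [geom_sum_eq hne]
    have h3 : (ω3 ^ m) ^ 3 = 1 := by rw [← pow_mul, mul_comm, pow_mul, ω3_pow3, one_pow]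
    rw [h3]
    simp

lemma conj_mul_pow_ω3 (n : ℕ) : (starRingEnd ℂ) (ω3 ^ n) * ω3 ^ n = 1 := by
  rw [map_pow, ← mul_pow, ω3_conj_mul, one_pow]

lemma conj_pow_ω3 (n : ℕ) : (starRingEnd ℂ) (ω3 ^ n) = ω3 ^ (2 * n) := by
  have h := conj_mul_pow_ω3 n
  have h2 : ω3 ^ (2 * n) * ω3 ^ n = 1 := by
    rw [← pow_add]
    have : 2 * n + n = 3 * n := by ring
    rw [this, pow_mul, ω3_pow3, one_pow]
  have hne : ω3 ^ n ≠ 0 := by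
    intro hz
    rw [hz, mul_zero] at h; simp at h
  exact mul_right_cancel₀ hne (h.trans h2.symm)

/-! ### The product states built from phases -/

noncomputable def psiV (d : ℕ) (θ : Fin d → Fin 3) : Fin d → ℂ :=
  fun i => ((Real.sqrt d : ℝ) : ℂ)⁻¹ * ω3 ^ (θ i : ℕ)

noncomputable def phiV (d : ℕ) (θ : Fin d → Fin 3) : Fin d → ℂ :=
  fun i => ((Real.sqrt d : ℝ) : ℂ)⁻¹ * ω3 ^ (2 * (θ i : ℕ))

lemma sqrtd_sq {d : ℕ} (hd : 0 < d) :
    ((Real.sqrt d : ℝ) : ℂ) * ((Real.sqrt d : ℝ) : ℂ) = (d : ℂ) := by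
  rw [← Complex.ofReal_mul, Real.mul_self_sqrt (by positivity)]
  simp

lemma norm_gen {d : ℕ} (hd : 0 < d) (g : Fin d → ℕ) :
    star (fun i => ((Real.sqrt d : ℝ) : ℂ)⁻¹ * ω3 ^ (g i)) ⬝ᵥ
      (fun i => ((Real.sqrt d : ℝ) : ℂ)⁻¹ * ω3 ^ (g i)) = 1 := by
  unfold dotProduct
  have hterm : ∀ i, star (((Real.sqrt d : ℝ) : ℂ)⁻¹ * ω3 ^ (g i)) *
      (((Real.sqrt d : ℝ) : ℂ)⁻¹ * ω3 ^ (g i)) = (d : ℂ)⁻¹ := by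
    intro i
    have : star (((Real.sqrt d : ℝ) : ℂ)⁻¹ * ω3 ^ (g i)) =
        ((Real.sqrt d : ℝ) : ℂ)⁻¹ * (starRingEnd ℂ) (ω3 ^ (g i)) := by
      simp [RCLike.star_def, _root_.map_mul, map_inv₀, Complex.conj_ofReal]
    rw [this]
    calc ((Real.sqrt d : ℝ) : ℂ)⁻¹ * (starRingEnd ℂ) (ω3 ^ (g i)) *
          (((Real.sqrt d : ℝ) : ℂ)⁻¹ * ω3 ^ (g i))
        = ((Real.sqrt d : ℝ) : ℂ)⁻¹ * ((Real.sqrt d : ℝ) : ℂ)⁻¹ *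
            ((starRingEnd ℂ) (ω3 ^ (g i)) * ω3 ^ (g i)) := by ring
      _ = (d : ℂ)⁻¹ := by rw [conj_mul_pow_ω3, mul_one, ← mul_inv, sqrtd_sq hd]
  simp only [Pi.star_apply]
  rw [Finset.sum_congr rfl (fun i _ => hterm i)]
  simp only [Finset.sum_const, Finset.card_univ, Fintype.card_fin, nsmul_eq_mul]
  have hdne : (d : ℂ) ≠ 0 := Nat.cast_ne_zero.mpr hd.ne'
  field_simp

lemma norm_psiV {d : ℕ} (hd : 0 < d) (θ : Fin d → Fin 3) :
    star (psiV d θ) ⬝ᵥ psiV d θ = 1 := norm_gen hd _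

lemma norm_phiV {d : ℕ} (hd : 0 < d) (θ : Fin d → Fin 3) :
    star (phiV d θ) ⬝ᵥ phiV d θ = 1 := norm_gen hd _

lemma kron_entry {d : ℕ} (hd : 0 < d) (θ : Fin d → Fin 3) (a b c e : Fin d) :
    (outer (psiV d θ) ⊗ₖ outer (phiV d θ)) (a, b) (c, e)
      = ((d : ℂ) ^ 2)⁻¹ *
        ω3 ^ ((θ a : ℕ) + 2 * (θ c : ℕ) + 2 * (θ b : ℕ) + 4 * (θ e : ℕ)) := by
  have hk : (outer (psiV d θ) ⊗ₖ outer (phiV d θ)) (a, b) (c, e)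
      = outer (psiV d θ) a c * outer (phiV d θ) b e := rfl
  rw [hk]
  have h1 : outer (psiV d θ) a c = psiV d θ a * (starRingEnd ℂ) (psiV d θ c) := rfl
  have h2 : outer (phiV d θ) b e = phiV d θ b * (starRingEnd ℂ) (phiV d θ e) := rfl
  rw [h1, h2]
  unfold psiV phiV
  simp only [_root_.map_mul, map_inv₀, Complex.conj_ofReal, conj_pow_ω3]
  set s : ℂ := ((Real.sqrt d : ℝ) : ℂ)
  have hs : s * s = (d : ℂ) := sqrtd_sq hd
  calc s⁻¹ * ω3 ^ (θ a : ℕ) * (s⁻¹ * ω3 ^ (2 * (θ c : ℕ))) *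
        (s⁻¹ * ω3 ^ (2 * (θ b : ℕ)) * (s⁻¹ * ω3 ^ (2 * (2 * (θ e : ℕ)))))
      = (s⁻¹ * s⁻¹) * (s⁻¹ * s⁻¹) *
          (ω3 ^ (θ a : ℕ) * ω3 ^ (2 * (θ c : ℕ)) * ω3 ^ (2 * (θ b : ℕ)) *
            ω3 ^ (2 * (2 * (θ e : ℕ)))) := by ring
    _ = ((d : ℂ) ^ 2)⁻¹ *
          ω3 ^ ((θ a : ℕ) + 2 * (θ c : ℕ) + 2 * (θ b : ℕ) + 4 * (θ e : ℕ)) := by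
        rw [← mul_inv, hs, ← mul_inv, ← sq, ← pow_add, ← pow_add, ← pow_add]
        congr 1
        congr 1
        omega

def Mexp (d : ℕ) (a b c e : Fin d) (i : Fin d) : ℕ :=
  (if i = a then 1 else 0) + 2 * (if i = c then 1 else 0) +
    2 * (if i = b then 1 else 0) + 4 * (if i = e then 1 else 0)

lemma exp_eq_sum {d : ℕ} (θ : Fin d → Fin 3) (a b c e : Fin d) :
    (θ a : ℕ) + 2 * (θ c : ℕ) + 2 * (θ b : ℕ) + 4 * (θ e : ℕ)
      = ∑ i, (θ i : ℕ) * Mexp d a b c e i := by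
  have hterm : ∀ i, (θ i : ℕ) * Mexp d a b c e i
      = (if i = a then (θ i : ℕ) else 0) + (if i = c then 2 * (θ i : ℕ) else 0) +
        (if i = b then 2 * (θ i : ℕ) else 0) + (if i = e then 4 * (θ i : ℕ) else 0) := by
    intro i; unfold Mexp; split_ifs <;> ring
  rw [Finset.sum_congr rfl (fun i _ => hterm i)]
  simp only [Finset.sum_add_distrib, Finset.sum_ite_eq', Finset.mem_univ, if_true]

lemma sum_phase {d : ℕ} (a b c e : Fin d) :
    ∑ θ : Fin d → Fin 3,
        ω3 ^ ((θ a : ℕ) + 2 * (θ c : ℕ) + 2 * (θ b : ℕ) + 4 * (θ e : ℕ))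
      = if (∀ i, 3 ∣ Mexp d a b c e i) then (3 : ℂ) ^ d else 0 := by
  have h1 : ∀ θ : Fin d → Fin 3,
      ω3 ^ ((θ a : ℕ) + 2 * (θ c : ℕ) + 2 * (θ b : ℕ) + 4 * (θ e : ℕ))
        = ∏ i, ω3 ^ ((θ i : ℕ) * Mexp d a b c e i) := by
    intro θ
    rw [exp_eq_sum, ← Finset.prod_pow_eq_pow_sum]
  rw [Finset.sum_congr rfl (fun θ _ => h1 θ)]
  have h2 := Finset.prod_univ_sum (fun _ : Fin d => (Finset.univ : Finset (Fin 3)))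
      (fun i t => ω3 ^ ((t : ℕ) * Mexp d a b c e i))
  rw [Fintype.piFinset_univ] at h2
  rw [← h2]
  rw [Finset.prod_congr rfl (fun i _ => ω3_sum (Mexp d a b c e i))]
  by_cases hall : ∀ i, 3 ∣ Mexp d a b c e i
  · rw [if_pos hall, Finset.prod_congr rfl (fun i _ => if_pos (hall i))]
    simp
  · rw [if_neg hall]
    push_neg at hall
    obtain ⟨i, hi⟩ := hall
    exact Finset.prod_eq_zero (Finset.mem_univ i) (if_neg hi)

lemma cond_iff {d : ℕ} (a b c e : Fin d) :
    (∀ i, 3 ∣ Mexp d a b c e i) ↔ ((a = b ∧ c = e) ∨ (a = c ∧ b = e)) := by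
  constructor
  · intro h
    by_cases hab : a = b
    · left
      refine ⟨hab, ?_⟩
      by_contra hce
      have hc := h c
      unfold Mexp at hc
      rw [if_pos rfl] at hc
      rw [if_neg (fun hcb : c = e => hce hcb)] at hc
      by_cases hca : c = a
      · rw [if_pos hca, if_pos (hca.trans hab)] at hc; omega
      · rw [if_neg hca, if_neg (fun hcb : c = b => hca (hcb.trans hab.symm))] at hc; omega
    · right
      have ha := h a
      unfold Mexp at ha
      rw [if_pos rfl, if_neg hab] at ha
      by_cases hac : a = c
      · rw [if_pos hac] at ha
        have hae : ¬ a = e := by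
          by_contra hae
          rw [if_pos hae] at ha; omega
        rw [if_neg hae] at ha
        refine ⟨hac, ?_⟩
        have hb := h b
        unfold Mexp at hb
        rw [if_neg (fun hba : b = a => hab hba.symm)] at hb
        rw [if_pos rfl] at hb
        rw [if_neg (fun hbc : b = c => hab (hbc.trans hac.symm).symm)] at hb
        by_contra hbe
        rw [if_neg hbe] at hb; omega
      · exfalso
        rw [if_neg hac] at ha
        by_cases hae : a = e
        · rw [if_pos hae] at ha; omega
        · rw [if_neg hae] at ha; omega
  · rintro (⟨rfl, rfl⟩ | ⟨rfl, rfl⟩) i <;> unfold Mexp <;> split_ifs <;> omega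

/-! ### The separable state `σ'` -/

noncomputable def sigA (d : ℕ) : Matrix (Fin d × Fin d) (Fin d × Fin d) ℂ :=
  ∑ θ : Fin d → Fin 3,
    ((((3 : ℝ) ^ d)⁻¹ : ℝ) : ℂ) • (outer (psiV d θ) ⊗ₖ outer (phiV d θ))

lemma sigA_apply {d : ℕ} (hd : 0 < d) (a b c e : Fin d) :
    sigA d (a, b) (c, e)
      = if (a = b ∧ c = e) ∨ (a = c ∧ b = e) then ((d : ℂ) ^ 2)⁻¹ else 0 := by
  unfold sigA
  rw [Matrix.sum_apply]
  have hterm : ∀ θ : Fin d → Fin 3,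
      (((((3 : ℝ) ^ d)⁻¹ : ℝ) : ℂ) • (outer (psiV d θ) ⊗ₖ outer (phiV d θ))) (a, b) (c, e)
        = (((3 : ℂ) ^ d)⁻¹ * ((d : ℂ) ^ 2)⁻¹) *
            ω3 ^ ((θ a : ℕ) + 2 * (θ c : ℕ) + 2 * (θ b : ℕ) + 4 * (θ e : ℕ)) := by
    intro θ
    rw [Matrix.smul_apply, kron_entry hd, smul_eq_mul]
    push_cast
    ring
  rw [Finset.sum_congr rfl (fun θ _ => hterm θ), ← Finset.mul_sum, sum_phase]
  by_cases h : (a = b ∧ c = e) ∨ (a = c ∧ b = e)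
  · rw [if_pos ((cond_iff a b c e).2 h), if_pos h]
    have h3 : ((3 : ℂ) ^ d) ≠ 0 := pow_ne_zero d (by norm_num)
    calc ((3 : ℂ) ^ d)⁻¹ * ((d : ℂ) ^ 2)⁻¹ * (3 : ℂ) ^ d
        = ((d : ℂ) ^ 2)⁻¹ * (((3 : ℂ) ^ d)⁻¹ * (3 : ℂ) ^ d) := by ring
      _ = ((d : ℂ) ^ 2)⁻¹ := by rw [inv_mul_cancel₀ h3, mul_one]
  · rw [if_neg (fun hh => h ((cond_iff a b c e).1 hh)), if_neg h, mul_zero]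

lemma sigA_sep {d : ℕ} (hd : 0 < d) : SepState (sigA d) := by
  have hcard : Fintype.card (Fin d → Fin 3) = 3 ^ d := by
    simp [Fintype.card_fun]
  refine ⟨3 ^ d, fun _ => ((3 : ℝ) ^ d)⁻¹,
    fun k => psiV d ((Fintype.equivFinOfCardEq hcard).symm k),
    fun k => phiV d ((Fintype.equivFinOfCardEq hcard).symm k), ?_, ?_, ?_, ?_, ?_⟩
  · intro i; positivity
  · rw [Finset.sum_const, Finset.card_univ, Fintype.card_fin, nsmul_eq_mul]
    have : ((3 : ℝ) ^ d) ≠ 0 := by positivity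
    field_simp
    simp
  · intro i; exact norm_psiV hd _
  · intro i; exact norm_phiV hd _
  · unfold sigA
    exact (Equiv.sum_comp (Fintype.equivFinOfCardEq hcard).symm
      (fun θ => ((((3 : ℝ) ^ d)⁻¹ : ℝ) : ℂ) • (outer (psiV d θ) ⊗ₖ outer (phiV d θ)))).symm

lemma sigA_ptrace {d : ℕ} (hd : 0 < d) :
    ptraceB (sigA d) = (d : ℂ)⁻¹ • (1 : Matrix (Fin d) (Fin d) ℂ) := by
  have hdne : (d : ℂ) ≠ 0 := Nat.cast_ne_zero.mpr hd.ne'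
  ext a c
  rw [ptraceB]
  simp only [Matrix.of_apply, Matrix.smul_apply, Matrix.one_apply, smul_eq_mul]
  by_cases hac : a = c
  · subst hac
    have hcond : ∀ k : Fin d, sigA d (a, k) (a, k) = ((d : ℂ) ^ 2)⁻¹ := fun k => by
      rw [sigA_apply hd]; exact if_pos (Or.inr ⟨rfl, rfl⟩)
    rw [Finset.sum_congr rfl (fun k _ => hcond k), if_pos rfl, mul_one]
    simp only [Finset.sum_const, Finset.card_univ, Fintype.card_fin, nsmul_eq_mul]
    field_simp
  · have hcond : ∀ k : Fin d, sigA d (a, k) (c, k) = 0 := by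
      intro k
      rw [sigA_apply hd]
      apply if_neg
      rintro (⟨h1, h2⟩ | ⟨h1, -⟩)
      · exact hac (h1.trans h2.symm)
      · exact hac h1
    rw [Finset.sum_congr rfl (fun k _ => hcond k), if_neg hac, mul_zero]
    simp

/-! ### The separable state `σ` (diagonal) -/

noncomputable def sigB (d : ℕ) : Matrix (Fin d × Fin d) (Fin d × Fin d) ℂ :=
  Matrix.of fun p q => if p = q ∧ p.1 ≠ p.2 then ((d : ℂ) * ((d : ℂ) - 1))⁻¹ else 0

def basV (d : ℕ) (i : Fin d) : Fin d → ℂ := fun x => if x = i then 1 else 0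

lemma norm_basV (d : ℕ) (i : Fin d) : star (basV d i) ⬝ᵥ basV d i = 1 := by
  unfold dotProduct basV
  simp only [Pi.star_apply]
  rw [Finset.sum_congr rfl (fun x _ => show star (if x = i then (1:ℂ) else 0) *
    (if x = i then 1 else 0) = if x = i then 1 else 0 by split_ifs <;> simp)]
  simp

lemma outer_basV (d : ℕ) (i a c : Fin d) :
    outer (basV d i) a c = if a = i ∧ c = i then 1 else 0 := by
  have : outer (basV d i) a c = basV d i a * star (basV d i c) := rfl
  rw [this]
  unfold basV
  split_ifs with h1 h2 h3 h4 h5 <;> simp_all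

lemma sum_prod_entry (d : ℕ) (w : ℂ) (a b c e : Fin d) :
    (∑ ij : Fin d × Fin d, (if ij.1 = ij.2 then (0 : ℂ) else w) •
        (outer (basV d ij.1) ⊗ₖ outer (basV d ij.2))) (a, b) (c, e)
      = if (a = c ∧ b = e) ∧ a ≠ b then w else 0 := by
  rw [Matrix.sum_apply]
  have hterm : ∀ ij : Fin d × Fin d,
      ((if ij.1 = ij.2 then (0 : ℂ) else w) •
        (outer (basV d ij.1) ⊗ₖ outer (basV d ij.2))) (a, b) (c, e)
      = (if ij.1 = ij.2 then (0 : ℂ) else w) *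
          ((if a = ij.1 ∧ c = ij.1 then 1 else 0) * (if b = ij.2 ∧ e = ij.2 then 1 else 0)) := by
    intro ij
    rw [Matrix.smul_apply, smul_eq_mul]
    congr 1
    have : (outer (basV d ij.1) ⊗ₖ outer (basV d ij.2)) (a, b) (c, e)
        = outer (basV d ij.1) a c * outer (basV d ij.2) b e := rfl
    rw [this, outer_basV, outer_basV]
  rw [Finset.sum_congr rfl (fun ij _ => hterm ij)]
  rw [Finset.sum_eq_single (a, b)]
  · by_cases hca : c = a
    · by_cases heb : e = b
      · by_cases hab : a = b
        · simp [hca, heb, hab]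
        · simp [hca, heb, hab]
      · have hbe : ¬ (b = e) := fun h => heb h.symm
        simp [heb, hbe]
    · have hac2 : ¬ (a = c) := fun h => hca h.symm
      simp [hca, hac2]
  · intro ij _ hij
    by_cases h1 : a = ij.1 ∧ c = ij.1
    · by_cases h2 : b = ij.2 ∧ e = ij.2
      · exfalso; apply hij
        rw [Prod.ext_iff]
        exact ⟨h1.1.symm, h2.1.symm⟩
      · rw [if_neg h2]; simp
    · rw [if_neg h1]; simp
  · intro h
    exact absurd (Finset.mem_univ (a, b)) h

lemma sigB_eq_sum (d : ℕ) :
    sigB d = ∑ ij : Fin d × Fin d, (if ij.1 = ij.2 then (0 : ℂ) else ((d : ℂ) * ((d : ℂ) - 1))⁻¹) •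
        (outer (basV d ij.1) ⊗ₖ outer (basV d ij.2)) := by
  ext ⟨a, b⟩ ⟨c, e⟩
  rw [sum_prod_entry]
  show (if (a, b) = (c, e) ∧ a ≠ b then ((d : ℂ) * ((d : ℂ) - 1))⁻¹ else 0) = _
  congr 1
  rw [Prod.ext_iff]

lemma sigB_sep {d : ℕ} (hd2 : 2 ≤ d) : SepState (sigB d) := by
  have hdr : ((d : ℝ) * ((d : ℝ) - 1)) ≠ 0 := by
    have : (2 : ℝ) ≤ (d : ℝ) := by exact_mod_cast hd2
    nlinarith
  refine ⟨d * d, fun k => if (finProdFinEquiv.symm k).1 = (finProdFinEquiv.symm k).2 then 0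
      else ((d : ℝ) * ((d : ℝ) - 1))⁻¹,
    fun k => basV d (finProdFinEquiv.symm k).1,
    fun k => basV d (finProdFinEquiv.symm k).2, ?_, ?_, ?_, ?_, ?_⟩
  · intro i
    dsimp only
    split_ifs
    · exact le_refl 0
    · have hpos : (0:ℝ) < (d : ℝ) * ((d : ℝ) - 1) := by
        have h2 : (2 : ℝ) ≤ (d : ℝ) := by exact_mod_cast hd2
        nlinarith
      exact le_of_lt (inv_pos.mpr hpos)
  · rw [Equiv.sum_comp finProdFinEquiv.symm
      (fun ij : Fin d × Fin d => if ij.1 = ij.2 then (0:ℝ) else ((d : ℝ) * ((d : ℝ) - 1))⁻¹)]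
    rw [Fintype.sum_prod_type]
    set w : ℝ := ((d : ℝ) * ((d : ℝ) - 1))⁻¹ with hw
    have hrow : ∀ i : Fin d, (∑ j : Fin d, if i = j then (0:ℝ) else w)
        = ((d : ℝ) - 1) * w := by
      intro i
      have hsplit : ∀ j : Fin d, (if i = j then (0:ℝ) else w)
          = w - (if i = j then w else 0) := by
        intro j; split_ifs <;> ring
      rw [Finset.sum_congr rfl (fun j _ => hsplit j), Finset.sum_sub_distrib,
        Finset.sum_ite_eq, if_pos (Finset.mem_univ i), Finset.sum_const,
        Finset.card_univ, Fintype.card_fin, nsmul_eq_mul]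
      ring
    rw [Finset.sum_congr rfl (fun i _ => hrow i), Finset.sum_const,
      Finset.card_univ, Fintype.card_fin, nsmul_eq_mul]
    rw [hw]
    field_simp
    have hd1 : (d : ℝ) - 1 ≠ 0 := by
      have : (2 : ℝ) ≤ (d : ℝ) := by exact_mod_cast hd2
      linarith
    exact div_self hd1
  · intro i; exact norm_basV d _
  · intro i; exact norm_basV d _
  · rw [sigB_eq_sum]
    rw [← Equiv.sum_comp finProdFinEquiv.symm]
    apply Finset.sum_congr rfl
    intro k _
    congr 1
    rw [apply_ite (fun x : ℝ => (x : ℂ))]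
    push_cast
    rfl

lemma sigB_ptrace {d : ℕ} (hd2 : 2 ≤ d) :
    ptraceB (sigB d) = (d : ℂ)⁻¹ • (1 : Matrix (Fin d) (Fin d) ℂ) := by
  have hd : 0 < d := lt_of_lt_of_le two_pos hd2
  have hdne : (d : ℂ) ≠ 0 := Nat.cast_ne_zero.mpr hd.ne'
  have hd1ne : (d : ℂ) - 1 ≠ 0 := by
    rw [sub_ne_zero]
    intro hh
    have : d = 1 := by exact_mod_cast hh
    omega
  ext a c
  rw [ptraceB]
  simp only [Matrix.of_apply, Matrix.smul_apply, Matrix.one_apply, smul_eq_mul]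
  set w : ℂ := ((d : ℂ) * ((d : ℂ) - 1))⁻¹ with hw
  by_cases hac : a = c
  · subst hac
    have hcond : ∀ k : Fin d, sigB d (a, k) (a, k) = if a = k then 0 else w := by
      intro k
      show (if (a, k) = (a, k) ∧ a ≠ k then w else 0) = if a = k then 0 else w
      by_cases hak : a = k
      · rw [if_neg (fun hh => hh.2 hak), if_pos hak]
      · rw [if_pos ⟨rfl, hak⟩, if_neg hak]
    rw [Finset.sum_congr rfl (fun k _ => hcond k), if_pos rfl, mul_one]
    have hsplit : ∀ k : Fin d, (if a = k then (0:ℂ) else w) = w - (if a = k then w else 0) := by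
      intro k; split_ifs <;> ring
    rw [Finset.sum_congr rfl (fun k _ => hsplit k), Finset.sum_sub_distrib,
      Finset.sum_ite_eq, if_pos (Finset.mem_univ a), Finset.sum_const,
      Finset.card_univ, Fintype.card_fin, nsmul_eq_mul, hw]
    field_simp
  · have hcond : ∀ k : Fin d, sigB d (a, k) (c, k) = 0 := by
      intro k
      apply if_neg
      rintro ⟨hpq, -⟩
      rw [Prod.ext_iff] at hpq
      exact hac hpq.1
    rw [Finset.sum_congr rfl (fun k _ => hcond k), if_neg hac, mul_zero]
    simp

lemma key_id {d : ℕ} (hd2 : 2 ≤ d) :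
    maxEnt d + ((d : ℂ) - 1) • sigB d = (d : ℂ) • sigA d := by
  have hd : 0 < d := lt_of_lt_of_le two_pos hd2
  have hdne : (d : ℂ) ≠ 0 := Nat.cast_ne_zero.mpr hd.ne'
  have hd1ne : (d : ℂ) - 1 ≠ 0 := by
    rw [sub_ne_zero]
    intro hh
    have : d = 1 := by exact_mod_cast hh
    omega
  ext ⟨a, b⟩ ⟨c, e⟩
  rw [Matrix.add_apply, Matrix.smul_apply, Matrix.smul_apply, sigA_apply hd,
    smul_eq_mul, smul_eq_mul]
  have hme : maxEnt d (a, b) (c, e) = if a = b ∧ c = e then (d : ℂ)⁻¹ else 0 := rfl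
  have hsb : sigB d (a, b) (c, e)
      = if (a, b) = (c, e) ∧ a ≠ b then ((d : ℂ) * ((d : ℂ) - 1))⁻¹ else 0 := rfl
  rw [hme, hsb]
  by_cases h1 : a = b ∧ c = e
  · rw [if_pos h1, if_neg (fun hh => hh.2 h1.1), if_pos (Or.inl h1), mul_zero, add_zero]
    field_simp
  · rw [if_neg h1]
    by_cases h2 : a = c ∧ b = e
    · have hab : a ≠ b := by
        intro hab
        exact h1 ⟨hab, (h2.1.symm.trans hab).trans h2.2⟩
      rw [if_pos ⟨Prod.ext h2.1 h2.2, hab⟩, if_pos (Or.inr h2), zero_add]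
      field_simp
    · have hno : ¬ ((a, b) = (c, e) ∧ a ≠ b) := by
        rintro ⟨hpq, -⟩
        rw [Prod.ext_iff] at hpq
        exact h2 ⟨hpq.1, hpq.2⟩
      rw [if_neg hno, if_neg (fun hh => hh.elim (fun hx => h1 hx) (fun hx => h2 hx))]
      simp

/-! ### Lower bound: the overlap functional -/

lemma sep_overlap {d : ℕ} {σ : Matrix (Fin d × Fin d) (Fin d × Fin d) ℂ} (h : SepState σ) :
    ∃ x : ℝ, 0 ≤ x ∧ x ≤ 1 ∧
      (∑ i : Fin d, ∑ j : Fin d, σ (i, i) (j, j)) = (x : ℂ) := by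
  obtain ⟨n, p, ψ, φ, hp0, hp1, hψ, hφ, rfl⟩ := h
  set t : Fin n → ℂ := fun k => ∑ i, ψ k i * φ k i with ht
  have hentry : ∀ (k : Fin n) (i j : Fin d),
      ((p k : ℂ) • (outer (ψ k) ⊗ₖ outer (φ k))) (i, i) (j, j)
        = (p k : ℂ) * ((ψ k i * φ k i) * (starRingEnd ℂ) (ψ k j * φ k j)) := by
    intro k i j
    rw [Matrix.smul_apply, smul_eq_mul]
    congr 1
    show outer (ψ k) i j * outer (φ k) i j = _
    show (ψ k i * star (ψ k j)) * (φ k i * star (φ k j)) = _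
    rw [_root_.map_mul]
    simp only [Complex.star_def]
    ring
  have hswap : (∑ i : Fin d, ∑ j : Fin d,
      (∑ k, (p k : ℂ) • (outer (ψ k) ⊗ₖ outer (φ k))) (i, i) (j, j))
      = ∑ k, (p k : ℂ) * (t k * (starRingEnd ℂ) (t k)) := by
    simp only [Matrix.sum_apply]
    have hc1 : ∀ i : Fin d,
        (∑ j : Fin d, ∑ k, ((p k : ℂ) • (outer (ψ k) ⊗ₖ outer (φ k))) (i, i) (j, j))
          = ∑ k, ∑ j : Fin d, ((p k : ℂ) • (outer (ψ k) ⊗ₖ outer (φ k))) (i, i) (j, j) :=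
      fun i => Finset.sum_comm
    rw [Finset.sum_congr rfl (fun i _ => hc1 i), Finset.sum_comm]
    apply Finset.sum_congr rfl
    intro k _
    rw [Finset.sum_congr rfl (fun i (_ : i ∈ Finset.univ) =>
      Finset.sum_congr rfl (fun j (_ : j ∈ Finset.univ) => hentry k i j))]
    have hprod : t k * (starRingEnd ℂ) (t k)
        = ∑ i, ∑ j, (ψ k i * φ k i) * (starRingEnd ℂ) (ψ k j * φ k j) := by
      rw [ht]
      simp only [map_sum]
      rw [Finset.sum_mul_sum]
    rw [hprod, Finset.mul_sum]
    apply Finset.sum_congr rfl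
    intro i _
    rw [Finset.mul_sum]
  have hnsq : ∀ k, Complex.normSq (t k) ≤ 1 := by
    intro k
    have hψ1 : ∑ i, Complex.normSq (ψ k i) = 1 := by
      have h1 := hψ k
      unfold dotProduct at h1
      have h2 : ∑ i, (Complex.normSq (ψ k i) : ℂ) = 1 := by
        rw [← h1]
        apply Finset.sum_congr rfl
        intro i _
        rw [Pi.star_apply, Complex.normSq_eq_conj_mul_self]
        rfl
      exact_mod_cast h2
    have hφ1 : ∑ i, Complex.normSq (φ k i) = 1 := by
      have h1 := hφ k
      unfold dotProduct at h1
      have h2 : ∑ i, (Complex.normSq (φ k i) : ℂ) = 1 := by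
        rw [← h1]
        apply Finset.sum_congr rfl
        intro i _
        rw [Pi.star_apply, Complex.normSq_eq_conj_mul_self]
        rfl
      exact_mod_cast h2
    have habs : ‖t k‖ ≤ ∑ i, ‖ψ k i‖ * ‖φ k i‖ := by
      refine (norm_sum_le _ _).trans ?_
      apply le_of_eq
      apply Finset.sum_congr rfl
      intro i _
      exact norm_mul _ _
    have hcs : (∑ i, ‖ψ k i‖ * ‖φ k i‖) ^ 2
        ≤ (∑ i, ‖ψ k i‖ ^ 2) * (∑ i, ‖φ k i‖ ^ 2) :=
      Finset.sum_mul_sq_le_sq_mul_sq _ _ _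
    have hsum1 : (∑ i, ‖ψ k i‖ ^ 2) = 1 := by
      rw [Finset.sum_congr rfl (fun i (_ : i ∈ Finset.univ) => Complex.sq_norm (ψ k i))]
      exact hψ1
    have hsum2 : (∑ i, ‖φ k i‖ ^ 2) = 1 := by
      rw [Finset.sum_congr rfl (fun i (_ : i ∈ Finset.univ) => Complex.sq_norm (φ k i))]
      exact hφ1
    have habs2 : ‖t k‖ ^ 2 ≤ 1 := by
      have h3 : ‖t k‖ ^ 2 ≤ (∑ i, ‖ψ k i‖ * ‖φ k i‖) ^ 2 := by
        apply pow_le_pow_left₀ (norm_nonneg _) habs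
      calc ‖t k‖ ^ 2 ≤ _ := h3
        _ ≤ _ := hcs
        _ = 1 := by rw [hsum1, hsum2, mul_one]
    rw [Complex.normSq_eq_norm_sq]
    exact habs2
  refine ⟨∑ k, p k * Complex.normSq (t k), ?_, ?_, ?_⟩
  · apply Finset.sum_nonneg
    intro k _
    exact mul_nonneg (hp0 k) (Complex.normSq_nonneg _)
  · have hle : ∑ k, p k * Complex.normSq (t k) ≤ ∑ k, p k * 1 := by
      apply Finset.sum_le_sum
      intro k _
      exact mul_le_mul_of_nonneg_left (hnsq k) (hp0 k)
    have heq1 : ∑ k, p k * 1 = 1 := by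
      rw [Finset.sum_congr rfl (fun k _ => mul_one (p k))]
      exact hp1
    linarith
  · rw [hswap]
    rw [Complex.ofReal_sum]
    apply Finset.sum_congr rfl
    intro k _
    rw [Complex.ofReal_mul, Complex.mul_conj]

/-- The robustness of entanglement of the maximally entangled state on `C^d ⊗ C^d`,
with respect to separable states with maximally mixed marginal on the first factor,
is exactly `d - 1`: every feasible `s` satisfies `s ≥ d - 1`, and `s = d - 1` is
achievable. -/
theorem stmt8 (d : ℕ) (hd : 0 < d) :
    (∀ s : ℝ, 0 ≤ s → ∀ σ σ' : Matrix (Fin d × Fin d) (Fin d × Fin d) ℂ,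
      SepState σ → SepState σ' →
      ptraceB σ = (d : ℂ)⁻¹ • (1 : Matrix (Fin d) (Fin d) ℂ) →
      ptraceB σ' = (d : ℂ)⁻¹ • (1 : Matrix (Fin d) (Fin d) ℂ) →
      maxEnt d + ((s : ℝ) : ℂ) • σ = ((1 + s : ℝ) : ℂ) • σ' → (d : ℝ) - 1 ≤ s) ∧
    (∃ σ σ' : Matrix (Fin d × Fin d) (Fin d × Fin d) ℂ,
      SepState σ ∧ SepState σ' ∧
      ptraceB σ = (d : ℂ)⁻¹ • (1 : Matrix (Fin d) (Fin d) ℂ) ∧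
      ptraceB σ' = (d : ℂ)⁻¹ • (1 : Matrix (Fin d) (Fin d) ℂ) ∧
      maxEnt d + ((d : ℂ) - 1) • σ = (d : ℂ) • σ') := by
  constructor
  · intro s hs σ σ' hsep hsep' hpt hpt' heq
    obtain ⟨x, hx0, hx1, hxe⟩ := sep_overlap hsep
    obtain ⟨y, hy0, hy1, hye⟩ := sep_overlap hsep'
    have hdne : (d : ℂ) ≠ 0 := Nat.cast_ne_zero.mpr hd.ne'
    have hF := congrArg (fun M : Matrix (Fin d × Fin d) (Fin d × Fin d) ℂ =>
      ∑ i : Fin d, ∑ j : Fin d, M (i, i) (j, j)) heq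
    simp only [Matrix.add_apply, Matrix.smul_apply, smul_eq_mul,
      Finset.sum_add_distrib, ← Finset.mul_sum] at hF
    have hmax : (∑ i : Fin d, ∑ j : Fin d, maxEnt d (i, i) (j, j)) = (d : ℂ) := by
      have hone : ∀ i j : Fin d, maxEnt d (i, i) (j, j) = (d : ℂ)⁻¹ :=
        fun i j => if_pos ⟨rfl, rfl⟩
      rw [Finset.sum_congr rfl (fun i (_ : i ∈ Finset.univ) =>
        Finset.sum_congr rfl (fun j (_ : j ∈ Finset.univ) => hone i j))]
      simp only [Finset.sum_const, Finset.card_univ, Fintype.card_fin, nsmul_eq_mul]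
      rw [mul_inv_cancel₀ hdne, mul_one]
    rw [hmax, hxe, hye] at hF
    have hreal : (d : ℝ) + s * x = (1 + s) * y := by
      exact_mod_cast hF
    nlinarith [mul_nonneg hs hx0,
      mul_le_mul_of_nonneg_left hy1 (show (0:ℝ) ≤ 1 + s by linarith)]
  · rcases Nat.lt_or_ge d 2 with hd1 | hd2
    · have hd1' : d = 1 := by omega
      subst hd1'
      refine ⟨sigA 1, sigA 1, sigA_sep one_pos, sigA_sep one_pos,
        sigA_ptrace one_pos, sigA_ptrace one_pos, ?_⟩
      have h0 : ((1 : ℕ) : ℂ) - 1 = 0 := by norm_num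
      rw [h0, zero_smul, add_zero, Nat.cast_one, one_smul]
      ext ⟨a, b⟩ ⟨c, e⟩
      rw [sigA_apply one_pos]
      have hab : a = b := Subsingleton.elim a b
      have hce : c = e := Subsingleton.elim c e
      show (if a = b ∧ c = e then ((1 : ℕ) : ℂ)⁻¹ else 0) = _
      rw [if_pos ⟨hab, hce⟩, if_pos (Or.inl ⟨hab, hce⟩)]
      norm_num
    · exact ⟨sigB d, sigA d, sigB_sep hd2, sigA_sep hd,
        sigB_ptrace hd2, sigA_ptrace hd, key_id hd2⟩
end

section
/- Suppose a channel N admits a decomposition N = Σ_i c_i M_i with real coefficients c_i and trace-preserving maps M_i belonging to a convex set F of channels. Write s = Σ_{i: c_i < 0} |c_i|. Then Σ_i |c_i| = 2s + 1, and there exist M, M' ∈ F with N = (1+s)M' − sM. Conversely, any such two-term decomposition gives a decomposition with ℓ¹-norm 2s+1. Hence the minimal ℓ¹-norm over all decompositions equals 1 + 2R(N), where R(N) is the robustness of N with respect to F. -/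
/-- The robustness of `N` with respect to the free set `F`. -/
noncomputable def rob {V : Type*} [AddCommGroup V] [Module ℝ V] (F : Set V) (N : V) : ℝ :=
  sInf {s : ℝ | 0 ≤ s ∧ ∃ M ∈ F, (1 / (1 + s)) • N + (s / (1 + s)) • M ∈ F}

lemma key10 {V : Type*} [AddCommGroup V] [Module ℝ V]
    (F : Set V) (hF : Convex ℝ F) (hne : F.Nonempty)
    (T : V →ₗ[ℝ] ℝ) (hTF : ∀ M ∈ F, T M = 1)
    (N : V) (hTN : T N = 1)
    (m : ℕ) (c : Fin m → ℝ) (M : Fin m → V) (hM : ∀ i, M i ∈ F)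
    (hdec : N = ∑ i, c i • M i) :
    (∑ i, c i = 1) ∧
    (∑ i, |c i| = 2 * (∑ i, if c i < 0 then |c i| else 0) + 1) ∧
    (0 ≤ ∑ i, if c i < 0 then |c i| else 0) ∧
    ∃ M' ∈ F, ∃ M'' ∈ F,
      N = (1 + (∑ i, if c i < 0 then |c i| else 0)) • M'
          - (∑ i, if c i < 0 then |c i| else 0) • M'' := by
  set s : ℝ := ∑ i, if c i < 0 then |c i| else 0 with hsdef
  have hsum1 : ∑ i, c i = 1 := by
    have h1 := congrArg T hdec
    simp only [map_sum, map_smul, smul_eq_mul, hTN] at h1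
    calc ∑ i, c i = ∑ i, c i * T (M i) := by
          refine Finset.sum_congr rfl fun i _ => ?_
          rw [hTF _ (hM i), mul_one]
      _ = 1 := h1.symm
  have hpt : ∀ i, |c i| = c i + 2 * (if c i < 0 then |c i| else 0) := by
    intro i
    rcases lt_or_ge (c i) 0 with h | h
    · rw [if_pos h, abs_of_neg h]; ring
    · rw [if_neg (not_lt.mpr h), abs_of_nonneg h]; ring
  have habs : ∑ i, |c i| = 2 * s + 1 := by
    calc ∑ i, |c i| = ∑ i, (c i + 2 * (if c i < 0 then |c i| else 0)) :=
          Finset.sum_congr rfl fun i _ => hpt i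
      _ = (∑ i, c i) + 2 * s := by rw [Finset.sum_add_distrib, ← Finset.mul_sum]
      _ = 2 * s + 1 := by rw [hsum1]; ring
  have hs0 : 0 ≤ s := by
    apply Finset.sum_nonneg
    intro i _
    split <;> positivity
  refine ⟨hsum1, habs, hs0, ?_⟩
  rcases eq_or_lt_of_le hs0 with hz | hp
  · have hall : ∀ i, 0 ≤ c i := by
      intro i
      by_contra h
      push_neg at h
      have hzz := (Finset.sum_eq_zero_iff_of_nonneg
        (fun i (_ : i ∈ Finset.univ) => by positivity : ∀ i ∈ Finset.univ,
          (0:ℝ) ≤ if c i < 0 then |c i| else 0)).mp hz.symm i (Finset.mem_univ i)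
      rw [if_pos h] at hzz
      exact absurd hzz (ne_of_gt (abs_pos.mpr (ne_of_lt h)))
    have hNF : N ∈ F := by
      rw [hdec]
      exact hF.sum_mem (fun i _ => hall i) hsum1 (fun i _ => hM i)
    obtain ⟨W, hW⟩ := hne
    exact ⟨N, hNF, W, hW, by rw [← hz]; simp⟩
  · have hsne : s ≠ 0 := ne_of_gt hp
    have h1s : (1:ℝ) + s ≠ 0 := by positivity
    have hnegpt : ∀ i, (if c i < 0 then |c i| else 0) = (if c i < 0 then -c i else 0) := by
      intro i; split
      · exact abs_of_neg ‹_›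
      · rfl
    have hnegsum : ∑ i, (if c i < 0 then -c i else 0) = s := by
      rw [hsdef]; exact (Finset.sum_congr rfl fun i _ => (hnegpt i).symm)
    have hpossum : ∑ i, (if c i < 0 then 0 else c i) = 1 + s := by
      have : ∀ i, (if c i < 0 then (0:ℝ) else c i)
          = c i + (if c i < 0 then -c i else 0) := by
        intro i; split <;> ring
      rw [Finset.sum_congr rfl fun i _ => this i, Finset.sum_add_distrib, hsum1, hnegsum]
    refine ⟨∑ i, ((if c i < 0 then 0 else c i) / (1 + s)) • M i, ?_,
            ∑ i, ((if c i < 0 then -c i else 0) / s) • M i, ?_, ?_⟩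
    · refine hF.sum_mem (fun i _ => ?_) ?_ (fun i _ => hM i)
      · apply div_nonneg _ (by positivity : (0:ℝ) ≤ 1 + s)
        split_ifs with h
        · exact le_refl 0
        · exact not_lt.mp h
      · rw [← Finset.sum_div, hpossum, div_self h1s]
    · refine hF.sum_mem (fun i _ => ?_) ?_ (fun i _ => hM i)
      · apply div_nonneg _ (le_of_lt hp)
        split_ifs with h
        · linarith
        · exact le_refl 0
      · rw [← Finset.sum_div, hnegsum, div_self hsne]
    · rw [hdec, Finset.smul_sum, Finset.smul_sum, ← Finset.sum_sub_distrib]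
      refine Finset.sum_congr rfl fun i _ => ?_
      rw [smul_smul, smul_smul, ← sub_smul]
      congr 1
      by_cases h : c i < 0
      · rw [if_pos h, if_pos h]; field_simp; ring
      · rw [if_neg h, if_neg h]; field_simp; ring

/-- If `N = ∑ c i • M i` with `M i ∈ F` (each normalized, `T (M i) = 1`, `T` the trace
functional, `T N = 1`), and `s = ∑_{c i < 0} |c i|`, then `∑ |c i| = 2s + 1` and
`N = (1+s)M' - sM''` for some `M', M'' ∈ F`; conversely any two-term decomposition
`N = (1+s')M' - s'M''` gives a decomposition of ℓ¹-norm `2s'+1`; hence the minimal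
ℓ¹-norm over all decompositions of `N` into members of `F` equals `1 + 2·rob F N`. -/
theorem stmt10 {V : Type*} [AddCommGroup V] [Module ℝ V]
    (F : Set V) (hF : Convex ℝ F) (hne : F.Nonempty)
    (T : V →ₗ[ℝ] ℝ) (hTF : ∀ M ∈ F, T M = 1)
    (N : V) (hTN : T N = 1)
    (m : ℕ) (c : Fin m → ℝ) (M : Fin m → V) (hM : ∀ i, M i ∈ F)
    (hdec : N = ∑ i, c i • M i)
    (s : ℝ) (hs : s = ∑ i, if c i < 0 then |c i| else 0)
    (hatt : 0 ≤ rob F N ∧ ∃ M' ∈ F,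
      (1 / (1 + rob F N)) • N + (rob F N / (1 + rob F N)) • M' ∈ F) :
    (∑ i, |c i| = 2 * s + 1) ∧
    (∃ M' ∈ F, ∃ M'' ∈ F, N = (1 + s) • M' - s • M'') ∧
    (∀ s' : ℝ, 0 ≤ s' → ∀ M' ∈ F, ∀ M'' ∈ F, N = (1 + s') • M' - s' • M'' →
      ∃ (k : ℕ) (a : Fin k → ℝ) (P : Fin k → V),
        (∀ i, P i ∈ F) ∧ N = ∑ i, a i • P i ∧ ∑ i, |a i| = 2 * s' + 1) ∧
    sInf {t : ℝ | ∃ (k : ℕ) (a : Fin k → ℝ) (P : Fin k → V),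
        (∀ i, P i ∈ F) ∧ N = ∑ i, a i • P i ∧ t = ∑ i, |a i|}
      = 1 + 2 * rob F N := by
  obtain ⟨_, habs, _, htwo⟩ := key10 F hF hne T hTF N hTN m c M hM hdec
  rw [← hs] at habs htwo
  -- two-term decomposition gives ℓ¹-norm 2s'+1
  have part3 : ∀ s' : ℝ, 0 ≤ s' → ∀ M' ∈ F, ∀ M'' ∈ F, N = (1 + s') • M' - s' • M'' →
      ∃ (k : ℕ) (a : Fin k → ℝ) (P : Fin k → V),
        (∀ i, P i ∈ F) ∧ N = ∑ i, a i • P i ∧ ∑ i, |a i| = 2 * s' + 1 := by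
    intro s' hs' M' hM' M'' hM'' hN
    refine ⟨2, ![1 + s', -s'], ![M', M''], ?_, ?_, ?_⟩
    · intro i
      fin_cases i <;> simpa using ‹_›
    · rw [Fin.sum_univ_two]
      simpa [neg_smul, sub_eq_add_neg] using hN
    · rw [Fin.sum_univ_two]
      simp only [Matrix.cons_val_zero, Matrix.cons_val_one, Matrix.head_cons, abs_neg]
      rw [abs_of_nonneg (by linarith), abs_of_nonneg hs']
      ring
  refine ⟨habs, htwo, part3, ?_⟩
  set r := rob F N with hr
  obtain ⟨hr0, Q, hQ, hQmem⟩ := hatt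
  have h1r : (1:ℝ) + r ≠ 0 := by positivity
  set X := (1 / (1 + r)) • N + (r / (1 + r)) • Q with hX
  have hNX : N = (1 + r) • X - r • Q := by
    rw [hX, smul_add, smul_smul, smul_smul]
    have e1 : (1 + r) * (1 / (1 + r)) = 1 := by field_simp
    have e2 : (1 + r) * (r / (1 + r)) = r := by field_simp
    rw [e1, e2, one_smul]
    abel
  set S := {t : ℝ | ∃ (k : ℕ) (a : Fin k → ℝ) (P : Fin k → V),
      (∀ i, P i ∈ F) ∧ N = ∑ i, a i • P i ∧ t = ∑ i, |a i|} with hS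
  have hmemS : (1 + 2 * r) ∈ S := by
    refine ⟨2, ![1 + r, -r], ![X, Q], ?_, ?_, ?_⟩
    · intro i; fin_cases i <;> simpa using ‹_›
    · rw [Fin.sum_univ_two]
      simpa [neg_smul, sub_eq_add_neg] using hNX
    · rw [Fin.sum_univ_two]
      simp only [Matrix.cons_val_zero, Matrix.cons_val_one, Matrix.head_cons, abs_neg]
      rw [abs_of_nonneg (by linarith), abs_of_nonneg hr0]
      ring
  have hlb : ∀ t ∈ S, 1 + 2 * r ≤ t := by
    rintro t ⟨k, a, P, hP, hNP, ht⟩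
    obtain ⟨_, habs', hs0', P', hP', P'', hP'', hNd⟩ :=
      key10 F hF hne T hTF N hTN k a P hP hNP
    set sa : ℝ := ∑ i, if a i < 0 then |a i| else 0
    have h1sa : (1:ℝ) + sa ≠ 0 := by positivity
    have hra : r ≤ sa := by
      rw [hr, rob]
      refine csInf_le ⟨0, fun x hx => hx.1⟩ ⟨hs0', P'', hP'', ?_⟩
      have : (1 / (1 + sa)) • N + (sa / (1 + sa)) • P'' = P' := by
        rw [hNd, smul_sub, smul_smul, smul_smul]
        have e1 : (1 / (1 + sa)) * (1 + sa) = 1 := by field_simp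
        have e2 : (1 / (1 + sa)) * sa = sa / (1 + sa) := by field_simp
        rw [e1, e2, one_smul]
        abel
      rw [this]; exact hP'
    rw [ht, habs']
    linarith
  exact le_antisymm (csInf_le ⟨1 + 2 * r, hlb⟩ hmemS) (le_csInf ⟨_, hmemS⟩ hlb)
end

section
/- Let N₁, N₂ be quantum channels and F a convex set of channels closed under tensor products (entanglement-breaking channels). If N_i = (1+s_i)M_i' − s_i M_i with M_i, M_i' ∈ F (i = 1,2), then there exist M, M' ∈ F such that N₁ ⊗ N₂ = (1+s)M' − sM where s = (1+s₁)(1+s₂) + s₁s₂ − 1 = 2s₁s₂ + s₁ + s₂. Consequently R(N₁⊗N₂) ≤ 2R(N₁)R(N₂) + R(N₁) + R(N₂). -/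
open scoped TensorProduct

lemma rob_le {V : Type*} [AddCommGroup V] [Module ℝ V] (F : Set V) (N : V)
    (s : ℝ) (hs : 0 ≤ s) (M M' : V) (hM : M ∈ F) (hM' : M' ∈ F)
    (hN : N = (1 + s) • M' - s • M) : rob F N ≤ s := by
  have h1s : (1 : ℝ) + s ≠ 0 := by positivity
  have key : (1 / (1 + s)) • N + (s / (1 + s)) • M = M' := by
    rw [hN]; match_scalars <;> field_simp <;> ring
  exact csInf_le ⟨0, fun x hx => hx.1⟩ ⟨hs, M, hM, key ▸ hM'⟩

/-- Sub-multiplicativity-type bound for the robustness under tensor products: if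
`N i = (1+s i)M i' - s i • M i` with `M i, M i' ∈ F i` optimal (`s i = rob (F i) (N i)`),
and the free set `F₁₂` of the joint system is convex and closed under tensor products,
then `N₁ ⊗ N₂ = (1+s)M' - sM` for some `M, M' ∈ F₁₂` with `s = 2s₁s₂ + s₁ + s₂`, and
consequently `rob F₁₂ (N₁ ⊗ N₂) ≤ 2 R(N₁)R(N₂) + R(N₁) + R(N₂)`. -/
theorem stmt12 {V₁ V₂ : Type*} [AddCommGroup V₁] [Module ℝ V₁]
    [AddCommGroup V₂] [Module ℝ V₂]
    (F₁ : Set V₁) (F₂ : Set V₂) (F₁₂ : Set (V₁ ⊗[ℝ] V₂)) (hconv : Convex ℝ F₁₂)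
    (hten : ∀ M₁ ∈ F₁, ∀ M₂ ∈ F₂, M₁ ⊗ₜ[ℝ] M₂ ∈ F₁₂)
    (N₁ : V₁) (N₂ : V₂) (s₁ s₂ : ℝ) (hs₁ : 0 ≤ s₁) (hs₂ : 0 ≤ s₂)
    (M₁ M₁' : V₁) (hM₁ : M₁ ∈ F₁) (hM₁' : M₁' ∈ F₁)
    (M₂ M₂' : V₂) (hM₂ : M₂ ∈ F₂) (hM₂' : M₂' ∈ F₂)
    (h₁ : N₁ = (1 + s₁) • M₁' - s₁ • M₁)
    (h₂ : N₂ = (1 + s₂) • M₂' - s₂ • M₂)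
    (hopt₁ : s₁ = rob F₁ N₁) (hopt₂ : s₂ = rob F₂ N₂) :
    (∃ M ∈ F₁₂, ∃ M' ∈ F₁₂,
      N₁ ⊗ₜ[ℝ] N₂ = (1 + (2 * s₁ * s₂ + s₁ + s₂)) • M' - (2 * s₁ * s₂ + s₁ + s₂) • M) ∧
    rob F₁₂ (N₁ ⊗ₜ[ℝ] N₂)
      ≤ 2 * rob F₁ N₁ * rob F₂ N₂ + rob F₁ N₁ + rob F₂ N₂ := by
  set s : ℝ := 2 * s₁ * s₂ + s₁ + s₂ with hs_def
  have hs : 0 ≤ s := by positivity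
  have h1s : (0 : ℝ) < 1 + s := by positivity
  -- the four basic tensor products
  have hA : M₁' ⊗ₜ[ℝ] M₂' ∈ F₁₂ := hten _ hM₁' _ hM₂'
  have hB : M₁ ⊗ₜ[ℝ] M₂' ∈ F₁₂ := hten _ hM₁ _ hM₂'
  have hC : M₁' ⊗ₜ[ℝ] M₂ ∈ F₁₂ := hten _ hM₁' _ hM₂
  have hD : M₁ ⊗ₜ[ℝ] M₂ ∈ F₁₂ := hten _ hM₁ _ hM₂
  have hexp : N₁ ⊗ₜ[ℝ] N₂ =
      ((1 + s₁) * (1 + s₂)) • M₁' ⊗ₜ[ℝ] M₂' + (s₁ * s₂) • M₁ ⊗ₜ[ℝ] M₂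
      - (s₁ * (1 + s₂)) • M₁ ⊗ₜ[ℝ] M₂' - (s₂ * (1 + s₁)) • M₁' ⊗ₜ[ℝ] M₂ := by
    rw [h₁, h₂]
    simp only [TensorProduct.sub_tmul, TensorProduct.tmul_sub, ← TensorProduct.smul_tmul',
      TensorProduct.tmul_smul, smul_smul]
    module
  have hmain : ∃ M ∈ F₁₂, ∃ M' ∈ F₁₂,
      N₁ ⊗ₜ[ℝ] N₂ = (1 + s) • M' - s • M := by
    rcases eq_or_lt_of_le hs with h0 | hpos
    · -- s = 0, hence s₁ = s₂ = 0
      have hs₁0 : s₁ = 0 := by nlinarith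
      have hs₂0 : s₂ = 0 := by nlinarith
      refine ⟨_, hA, _, hA, ?_⟩
      rw [hexp, hs₁0, hs₂0, ← h0]
      module
    · set M : V₁ ⊗[ℝ] V₂ := (s₁ * (1 + s₂) / s) • M₁ ⊗ₜ[ℝ] M₂'
        + (s₂ * (1 + s₁) / s) • M₁' ⊗ₜ[ℝ] M₂ with hM_def
      set M' : V₁ ⊗[ℝ] V₂ := ((1 + s₁) * (1 + s₂) / (1 + s)) • M₁' ⊗ₜ[ℝ] M₂'
        + (s₁ * s₂ / (1 + s)) • M₁ ⊗ₜ[ℝ] M₂ with hM'_def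
      have hMmem : M ∈ F₁₂ := by
        apply hconv hB hC
        · positivity
        · positivity
        · field_simp; ring
      have hM'mem : M' ∈ F₁₂ := by
        apply hconv hA hD
        · positivity
        · positivity
        · field_simp; ring
      refine ⟨M, hMmem, M', hM'mem, ?_⟩
      rw [hexp, hM_def, hM'_def]
      have hsne : s ≠ 0 := ne_of_gt hpos
      have h1sne : (1 : ℝ) + s ≠ 0 := ne_of_gt h1s
      match_scalars <;> field_simp
  refine ⟨hmain, ?_⟩
  obtain ⟨M, hM, M', hM', heq⟩ := hmain
  rw [← hopt₁, ← hopt₂]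
  calc rob F₁₂ (N₁ ⊗ₜ[ℝ] N₂) ≤ s := rob_le _ _ s hs M M' hM hM' heq
    _ = 2 * s₁ * s₂ + s₁ + s₂ := hs_def
end

section
/- With the generalized robustness R_G(N) = min{s ≥ 0 : ∃ channel M with (N+sM)/(1+s) ∈ F}, where F is convex and closed under tensor products, one has R_G(N₁ ⊗ N₂) ≤ R_G(N₁)R_G(N₂) + R_G(N₁) + R_G(N₂); equivalently 1 + R_G(N₁⊗N₂) ≤ (1+R_G(N₁))(1+R_G(N₂)). -/
open scoped TensorProduct

/-- The generalized robustness of `N`: the least `s ≥ 0` such that mixing `N` with some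
channel `M ∈ C` (an arbitrary channel) with weight `s/(1+s)` gives a member of the free
set `F`. -/
noncomputable def grob {V : Type*} [AddCommGroup V] [Module ℝ V] (C F : Set V) (N : V) : ℝ :=
  sInf {s : ℝ | 0 ≤ s ∧ ∃ M ∈ C, (1 / (1 + s)) • N + (s / (1 + s)) • M ∈ F}

/-- Sub-multiplicativity of the generalized robustness under tensor products:
`1 + R_G(N₁ ⊗ N₂) ≤ (1 + R_G(N₁))(1 + R_G(N₂))`, where the channel sets and free
sets are convex and closed under tensor products and the minima defining
`R_G(N₁), R_G(N₂)` are attained. -/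
theorem stmt13 {V₁ V₂ : Type*} [AddCommGroup V₁] [Module ℝ V₁]
    [AddCommGroup V₂] [Module ℝ V₂]
    (C₁ F₁ : Set V₁) (C₂ F₂ : Set V₂) (C₁₂ F₁₂ : Set (V₁ ⊗[ℝ] V₂))
    (hCconv : Convex ℝ C₁₂)
    (hCten : ∀ M₁ ∈ C₁, ∀ M₂ ∈ C₂, M₁ ⊗ₜ[ℝ] M₂ ∈ C₁₂)
    (hFten : ∀ M₁ ∈ F₁, ∀ M₂ ∈ F₂, M₁ ⊗ₜ[ℝ] M₂ ∈ F₁₂)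
    (N₁ : V₁) (N₂ : V₂) (hN₁ : N₁ ∈ C₁) (hN₂ : N₂ ∈ C₂)
    (hatt₁ : 0 ≤ grob C₁ F₁ N₁ ∧ ∃ M ∈ C₁,
      (1 / (1 + grob C₁ F₁ N₁)) • N₁ + (grob C₁ F₁ N₁ / (1 + grob C₁ F₁ N₁)) • M ∈ F₁)
    (hatt₂ : 0 ≤ grob C₂ F₂ N₂ ∧ ∃ M ∈ C₂,
      (1 / (1 + grob C₂ F₂ N₂)) • N₂ + (grob C₂ F₂ N₂ / (1 + grob C₂ F₂ N₂)) • M ∈ F₂) :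
    1 + grob C₁₂ F₁₂ (N₁ ⊗ₜ[ℝ] N₂)
      ≤ (1 + grob C₁ F₁ N₁) * (1 + grob C₂ F₂ N₂) := by
  obtain ⟨hs₁, M₁, hM₁, hF₁⟩ := hatt₁
  obtain ⟨hs₂, M₂, hM₂, hF₂⟩ := hatt₂
  set s₁ := grob C₁ F₁ N₁ with hs₁def
  set s₂ := grob C₂ F₂ N₂ with hs₂def
  have h1 : (0:ℝ) < 1 + s₁ := by linarith
  have h2 : (0:ℝ) < 1 + s₂ := by linarith
  have hs0 : 0 ≤ s₁ + s₂ + s₁ * s₂ := by positivity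
  have key : grob C₁₂ F₁₂ (N₁ ⊗ₜ[ℝ] N₂) ≤ s₁ + s₂ + s₁ * s₂ := by
    apply csInf_le ⟨0, fun x hx => hx.1⟩
    rcases eq_or_lt_of_le hs0 with h | hspos
    · have hz₁ : s₁ = 0 := by nlinarith
      have hz₂ : s₂ = 0 := by nlinarith
      have hN₁F : N₁ ∈ F₁ := by simpa [hz₁] using hF₁
      have hN₂F : N₂ ∈ F₂ := by simpa [hz₂] using hF₂
      refine ⟨hs0, N₁ ⊗ₜ[ℝ] N₂, hCten _ hN₁ _ hN₂, ?_⟩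
      rw [← h]
      simpa using hFten _ hN₁F _ hN₂F
    · set M : V₁ ⊗[ℝ] V₂ := (s₂/(s₁ + s₂ + s₁ * s₂)) • (N₁ ⊗ₜ[ℝ] M₂)
        + ((s₁/(s₁ + s₂ + s₁ * s₂)) • (M₁ ⊗ₜ[ℝ] N₂)
        + (s₁*s₂/(s₁ + s₂ + s₁ * s₂)) • (M₁ ⊗ₜ[ℝ] M₂)) with hMdef
      have hM : M ∈ C₁₂ := by
        have := hCconv.sum_mem (t := (Finset.univ : Finset (Fin 3)))
          (w := ![s₂/(s₁ + s₂ + s₁ * s₂), s₁/(s₁ + s₂ + s₁ * s₂), s₁*s₂/(s₁ + s₂ + s₁ * s₂)])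
          (z := ![N₁ ⊗ₜ[ℝ] M₂, M₁ ⊗ₜ[ℝ] N₂, M₁ ⊗ₜ[ℝ] M₂])
          (by
            intro i _
            fin_cases i <;> simp <;> positivity)
          (by
            simp [Fin.sum_univ_three]
            have hne : s₁ + s₂ + s₁ * s₂ ≠ 0 := ne_of_gt hspos
            linear_combination inv_mul_cancel₀ hne)
          (by
            intro i _
            fin_cases i <;> simp
            exacts [hCten _ hN₁ _ hM₂, hCten _ hM₁ _ hN₂, hCten _ hM₁ _ hM₂])
        simpa [Fin.sum_univ_three, hMdef, add_assoc] using this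
      refine ⟨hs0, M, hM, ?_⟩
      have heq : (1 / (1 + (s₁ + s₂ + s₁ * s₂))) • (N₁ ⊗ₜ[ℝ] N₂)
          + ((s₁ + s₂ + s₁ * s₂) / (1 + (s₁ + s₂ + s₁ * s₂))) • M
          = ((1 / (1 + s₁)) • N₁ + (s₁ / (1 + s₁)) • M₁) ⊗ₜ[ℝ]
            ((1 / (1 + s₂)) • N₂ + (s₂ / (1 + s₂)) • M₂) := by
        have hsne : s₁ + s₂ + s₁ * s₂ ≠ 0 := ne_of_gt hspos
        have h1ne : (1:ℝ) + s₁ ≠ 0 := ne_of_gt h1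
        have h2ne : (1:ℝ) + s₂ ≠ 0 := ne_of_gt h2
        have hsne' : (1:ℝ) + (s₁ + s₂ + s₁ * s₂) ≠ 0 := by positivity
        simp only [hMdef, TensorProduct.tmul_add, TensorProduct.add_tmul,
          ← TensorProduct.smul_tmul', TensorProduct.tmul_smul, smul_smul, smul_add]
        match_scalars <;> field_simp <;> ring
      rw [heq]
      exact hFten _ hF₁ _ hF₂
  nlinarith [key]
end

section
/- Let Φ_N be the Choi state of a channel N: A → B with max eigenvalue μ > 1/d_A, and let Φ_Δ = I/(d_A d_B) be the Choi state of the completely depolarizing channel. Define M₋ = (μ d_A d_B Δ − N)/(μ d_A d_B − 1) and M₊ = (N + (μ d_A − 1)M₋)/(μ d_A). Then (assuming d_B ≥ 2) both M₊ and M₋ are channels whose Choi states satisfy Φ ≤ I/d_A (i.e., max eigenvalue ≤ 1/d_A), and N = μ d_A M₊ − (μ d_A − 1)M₋. -/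
open scoped Kronecker
open Matrix
open scoped ComplexOrder

section AuxStmt15
open scoped ComplexOrder

lemma myPsd_smul15 {n : Type*} [Fintype n] {c : ℝ} (hc : 0 ≤ c)
    {A : Matrix n n ℂ} (hA : A.PosSemidef) : ((c : ℂ) • A).PosSemidef := by
  constructor
  · rw [Matrix.IsHermitian, Matrix.conjTranspose_smul, hA.1.eq, Complex.star_def,
      Complex.conj_ofReal]
  · intro x
    exact (hA.smul (by exact_mod_cast hc : (0:ℂ) ≤ (c:ℂ))).2 x

lemma mySmul_one_sub_psd15 {n : Type*} [Fintype n] [DecidableEq n] {A : Matrix n n ℂ}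
    (hA : A.IsHermitian) {μ : ℝ} (h : ∀ i, hA.eigenvalues i ≤ μ) :
    ((μ : ℂ) • (1 : Matrix n n ℂ) - A).PosSemidef := by
  have hU : (hA.eigenvectorUnitary : Matrix n n ℂ) * star (hA.eigenvectorUnitary : Matrix n n ℂ) = 1 :=
    Matrix.mem_unitaryGroup_iff.mp hA.eigenvectorUnitary.2
  have key : (μ : ℂ) • (1 : Matrix n n ℂ) - A
      = (hA.eigenvectorUnitary : Matrix n n ℂ) *
        (Matrix.diagonal fun i => ((μ - hA.eigenvalues i : ℝ) : ℂ)) *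
        (hA.eigenvectorUnitary : Matrix n n ℂ)ᴴ := by
    have hd : (Matrix.diagonal fun i => ((μ - hA.eigenvalues i : ℝ) : ℂ))
        = (μ : ℂ) • (1 : Matrix n n ℂ) - Matrix.diagonal (RCLike.ofReal ∘ hA.eigenvalues) := by
      ext i j
      by_cases hij : i = j <;>
        simp [Matrix.diagonal, hij, Matrix.one_apply, Complex.ofReal_sub]
    rw [hd]
    conv_lhs => rw [hA.spectral_theorem]
    rw [Matrix.mul_sub, Matrix.sub_mul, Matrix.mul_smul, Matrix.smul_mul, Matrix.mul_one]
    congr 1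
    rw [← Matrix.star_eq_conjTranspose, hU]
  rw [key]
  exact (Matrix.posSemidef_diagonal_iff.mpr fun i => by
    have : (0:ℝ) ≤ μ - hA.eigenvalues i := sub_nonneg.mpr (h i)
    exact_mod_cast Complex.zero_le_real.mpr this).mul_mul_conjTranspose_same _

lemma myPtraceB_smul15 {A B : Type*} [Fintype B] (c : ℂ) (ρ : Matrix (A × B) (A × B) ℂ) :
    ptraceB (c • ρ) = c • ptraceB ρ := by
  ext i j; simp [ptraceB, Finset.mul_sum]

lemma myPtraceB_add15 {A B : Type*} [Fintype B] (ρ σ : Matrix (A × B) (A × B) ℂ) :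
    ptraceB (ρ + σ) = ptraceB ρ + ptraceB σ := by
  ext i j; simp [ptraceB, Finset.sum_add_distrib]

lemma myPtraceB_sub15 {A B : Type*} [Fintype B] (ρ σ : Matrix (A × B) (A × B) ℂ) :
    ptraceB (ρ - σ) = ptraceB ρ - ptraceB σ := by
  ext i j; simp [ptraceB, Finset.sum_sub_distrib]

lemma myPtraceB_one15 {A B : Type*} [Fintype A] [Fintype B] [DecidableEq A] [DecidableEq B] :
    ptraceB (1 : Matrix (A × B) (A × B) ℂ) = (Fintype.card B : ℂ) • 1 := by
  ext i j
  by_cases hij : i = j <;>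
    simp [ptraceB, Matrix.one_apply, Prod.ext_iff, hij, Finset.card_univ]

end AuxStmt15

/-- Decomposition of a channel via the depolarizing channel: if the Choi state `Φ` of a
channel (PSD with marginal `I/d_A`) has maximal eigenvalue `μ > 1/d_A` and `d_B ≥ 2`,
then `M₋ = (μ d_A d_B Δ - N)/(μ d_A d_B - 1)` and `M₊ = (N + (μ d_A - 1)M₋)/(μ d_A)`
are channels whose Choi states satisfy `Φ ≤ I/d_A`, and `N = μ d_A M₊ - (μ d_A - 1)M₋`. -/
theorem stmt15 (dA dB : ℕ) (hdA : 0 < dA) (hdB : 2 ≤ dB)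
    (Φ : Matrix (Fin dA × Fin dB) (Fin dA × Fin dB) ℂ)
    (hΦ : Φ.PosSemidef)
    (hmarg : ptraceB Φ = (dA : ℂ)⁻¹ • (1 : Matrix (Fin dA) (Fin dA) ℂ))
    (μ : ℝ) (hμgt : 1 / (dA : ℝ) < μ)
    (hμ : IsGreatest (Set.range hΦ.1.eigenvalues) μ)
    (ΦΔ ΦMm ΦMp : Matrix (Fin dA × Fin dB) (Fin dA × Fin dB) ℂ)
    (hΔ : ΦΔ = ((dA : ℂ) * (dB : ℂ))⁻¹ • (1 : Matrix (Fin dA × Fin dB) (Fin dA × Fin dB) ℂ))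
    (hMm : ΦMm = (((μ * dA * dB - 1 : ℝ) : ℂ))⁻¹ • (((μ * dA * dB : ℝ) : ℂ) • ΦΔ - Φ))
    (hMp : ΦMp = (((μ * dA : ℝ) : ℂ))⁻¹ • (Φ + ((μ * dA - 1 : ℝ) : ℂ) • ΦMm)) :
    ΦMm.PosSemidef ∧ ΦMp.PosSemidef ∧
    ptraceB ΦMm = (dA : ℂ)⁻¹ • (1 : Matrix (Fin dA) (Fin dA) ℂ) ∧
    ptraceB ΦMp = (dA : ℂ)⁻¹ • (1 : Matrix (Fin dA) (Fin dA) ℂ) ∧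
    ((dA : ℂ)⁻¹ • (1 : Matrix (Fin dA × Fin dB) (Fin dA × Fin dB) ℂ) - ΦMm).PosSemidef ∧
    ((dA : ℂ)⁻¹ • (1 : Matrix (Fin dA × Fin dB) (Fin dA × Fin dB) ℂ) - ΦMp).PosSemidef ∧
    Φ = ((μ * dA : ℝ) : ℂ) • ΦMp - ((μ * dA - 1 : ℝ) : ℂ) • ΦMm := by
  have hdA' : (0:ℝ) < dA := by exact_mod_cast hdA
  have hdB' : (2:ℝ) ≤ (dB:ℝ) := by exact_mod_cast hdB
  have hdB0 : (0:ℝ) < dB := by linarith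
  have hμ0 : 0 < μ := lt_trans (div_pos one_pos hdA') hμgt
  have h1 : 1 < μ * dA := by
    rw [div_lt_iff₀ hdA'] at hμgt; linarith
  have hb : 0 < μ * dA * dB - 1 := by nlinarith
  have hab : μ * dA ≤ μ * dA * dB - 1 := by nlinarith
  have hdAC : (dA : ℂ) ≠ 0 := by exact_mod_cast hdA'.ne'
  have hdBC : (dB : ℂ) ≠ 0 := by exact_mod_cast hdB0.ne'
  have haR : (0:ℝ) < μ * dA := by linarith
  have haC : ((μ * dA : ℝ) : ℂ) ≠ 0 := by exact_mod_cast haR.ne'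
  have hbC : ((μ * dA * dB - 1 : ℝ) : ℂ) ≠ 0 := by exact_mod_cast hb.ne'
  have hbC' : (μ:ℂ) * (dA:ℂ) * (dB:ℂ) - 1 ≠ 0 := by exact_mod_cast hb.ne'
  have haC' : (μ:ℂ) * (dA:ℂ) ≠ 0 := by exact_mod_cast haR.ne'
  have hev : ∀ i, hΦ.1.eigenvalues i ≤ μ := fun i => hμ.2 (Set.mem_range_self i)
  have hPsub : ((μ:ℂ) • (1 : Matrix (Fin dA × Fin dB) (Fin dA × Fin dB) ℂ) - Φ).PosSemidef :=
    mySmul_one_sub_psd15 hΦ.1 hev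
  have hscal : ((μ * dA * dB : ℝ) : ℂ) • ΦΔ
      = (μ:ℂ) • (1 : Matrix (Fin dA × Fin dB) (Fin dA × Fin dB) ℂ) := by
    rw [hΔ, smul_smul]
    congr 1
    push_cast
    field_simp
  have hMm' : ΦMm = (((μ * dA * dB - 1)⁻¹ : ℝ) : ℂ) •
      ((μ:ℂ) • (1 : Matrix (Fin dA × Fin dB) (Fin dA × Fin dB) ℂ) - Φ) := by
    rw [hMm, hscal, Complex.ofReal_inv]
  have psdMm : ΦMm.PosSemidef := by
    rw [hMm']
    exact myPsd_smul15 (inv_nonneg.mpr hb.le) hPsub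
  have psdMp : ΦMp.PosSemidef := by
    rw [hMp, ← Complex.ofReal_inv, show ((μ * dA - 1 : ℝ) : ℂ) • ΦMm
      = (((μ * dA - 1 : ℝ)) : ℂ) • ΦMm from rfl]
    exact myPsd_smul15 (inv_nonneg.mpr haR.le) (hΦ.add (myPsd_smul15 (by linarith) psdMm))
  have ptrMm : ptraceB ΦMm = (dA : ℂ)⁻¹ • (1 : Matrix (Fin dA) (Fin dA) ℂ) := by
    rw [hMm', myPtraceB_smul15, myPtraceB_sub15, myPtraceB_smul15, myPtraceB_one15, hmarg]
    simp only [Fintype.card_fin]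
    match_scalars
    push_cast
    field_simp [hbC', hdAC]
  have ptrMp : ptraceB ΦMp = (dA : ℂ)⁻¹ • (1 : Matrix (Fin dA) (Fin dA) ℂ) := by
    rw [hMp, myPtraceB_smul15, myPtraceB_add15, myPtraceB_smul15, hmarg, ptrMm]
    match_scalars
    push_cast
    field_simp [haC', hdAC]
    ring
  have hΦeq : ((μ * dA * dB - 1 : ℝ) : ℂ) • ΦMm
      = (μ:ℂ) • (1 : Matrix (Fin dA × Fin dB) (Fin dA × Fin dB) ℂ) - Φ := by
    rw [hMm', smul_smul, ← Complex.ofReal_mul, mul_inv_cancel₀ hb.ne', Complex.ofReal_one,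
      one_smul]
  have hΦ2 : Φ = (μ:ℂ) • (1 : Matrix (Fin dA × Fin dB) (Fin dA × Fin dB) ℂ)
      - ((μ * dA * dB - 1 : ℝ) : ℂ) • ΦMm := by
    rw [hΦeq]; module
  have hco : (0:ℝ) ≤ (dA:ℝ)⁻¹ - (μ * dA * dB - 1)⁻¹ * μ := by
    rw [sub_nonneg, inv_mul_eq_div, ← one_div, div_le_div_iff₀ hb hdA']
    nlinarith
  have e1 : (dA : ℂ)⁻¹ • (1 : Matrix (Fin dA × Fin dB) (Fin dA × Fin dB) ℂ) - ΦMm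
      = ((((dA:ℝ)⁻¹ - (μ * dA * dB - 1)⁻¹ * μ : ℝ)) : ℂ) • 1
        + ((((μ * dA * dB - 1)⁻¹ : ℝ)) : ℂ) • Φ := by
    rw [hMm']
    match_scalars <;> push_cast <;> ring
  have ubMm : ((dA : ℂ)⁻¹ • (1 : Matrix (Fin dA × Fin dB) (Fin dA × Fin dB) ℂ) - ΦMm).PosSemidef := by
    rw [e1]
    exact (myPsd_smul15 hco Matrix.PosSemidef.one).add
      (myPsd_smul15 (inv_nonneg.mpr hb.le) hΦ)
  have e2 : (dA : ℂ)⁻¹ • (1 : Matrix (Fin dA × Fin dB) (Fin dA × Fin dB) ℂ) - ΦMp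
      = (((dB : ℝ) - 1 : ℝ) : ℂ) • ΦMm := by
    rw [hMp]
    conv_lhs => rw [hΦ2]
    match_scalars <;> push_cast <;> field_simp [haC', hbC', hdAC] <;> ring
  have ubMp : ((dA : ℂ)⁻¹ • (1 : Matrix (Fin dA × Fin dB) (Fin dA × Fin dB) ℂ) - ΦMp).PosSemidef := by
    rw [e2]
    exact myPsd_smul15 (by linarith) psdMm
  refine ⟨psdMm, psdMp, ptrMm, ptrMp, ubMm, ubMp, ?_⟩
  rw [hMp, smul_smul, mul_inv_cancel₀ haC, one_smul, add_sub_cancel_right]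
end
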